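/- arXiv:2604.25566 — 10 statements merged into one kernel-verified Lean document; each statement's English description precedes it below -/
import Mathlib

section
/- Let (a_p)_p be a sequence of integers indexed by primes, and let (b_n)_n be a strictly increasing sequence of positive integers. Suppose that for every n, there exist infinitely many primes p such that a_p ≡ b_n (mod p). Then for every nonzero polynomial f with integer coefficients, there exist infinitely many primes p with p ∤ f(a_p). -/
/-- Anzawa–Funakura's criterion: if `(b_n)` is a strictly increasing sequence of
positive integers and for every `n` there are infinitely many primes `p` with
`a_p ≡ b_n (mod p)`, then for every nonzero integer polynomial `f` there are
infinitely many primes `p` with `p ∤ f(a_p)`. -/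
theorem statement2 (a : Nat.Primes → ℤ) (b : ℕ → ℤ)
    (hmono : StrictMono b) (hpos : ∀ n, 0 < b n)
    (h : ∀ n, {p : Nat.Primes | a p ≡ b n [ZMOD (p : ℕ)]}.Infinite)
    (f : Polynomial ℤ) (hf : f ≠ 0) :
    {p : Nat.Primes | ¬ ((p : ℕ) : ℤ) ∣ f.eval (a p)}.Infinite := by
  -- choose n with f.eval (b n) ≠ 0
  obtain ⟨n, hn⟩ : ∃ n, f.eval (b n) ≠ 0 := by
    by_contra hc
    push_neg at hc
    have hroots : {x : ℤ | f.IsRoot x}.Finite := Polynomial.finite_setOf_isRoot hf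
    exact Set.infinite_of_injective_forall_mem (f := b) hmono.injective
      (fun n => hc n) hroots
  set c := (f.eval (b n)).natAbs with hcdef
  have hcne : c ≠ 0 := Int.natAbs_ne_zero.mpr hn
  -- the set of primes ≤ c is finite
  have hfin : {p : Nat.Primes | (p : ℕ) ≤ c}.Finite := by
    have : Set.Finite ((fun p : Nat.Primes => (p : ℕ)) ⁻¹' (Set.Iic c)) :=
      Set.Finite.preimage (Set.injOn_of_injective Nat.Primes.coe_nat_injective)
        (Set.finite_Iic c)
    exact this
  have hinf : ({p : Nat.Primes | a p ≡ b n [ZMOD (p : ℕ)]} \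
      {p : Nat.Primes | (p : ℕ) ≤ c}).Infinite := (h n).diff hfin
  refine hinf.mono ?_
  rintro p ⟨hp1, hp2⟩
  simp only [Set.mem_setOf_eq, not_le] at hp1 hp2 ⊢
  intro hdvd
  -- congruence of polynomial values
  have hcast : ((a p : ℤ) : ZMod p) = ((b n : ℤ) : ZMod p) :=
    (ZMod.intCast_eq_intCast_iff _ _ _).mpr hp1
  have hcong : ((f.eval (a p) : ℤ) : ZMod p) = ((f.eval (b n) : ℤ) : ZMod p) := by
    have h1 := Polynomial.eval_intCast_map (Int.castRingHom (ZMod p)) f (a p)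
    have h2 := Polynomial.eval_intCast_map (Int.castRingHom (ZMod p)) f (b n)
    simp only [Int.coe_castRingHom, Int.cast_id] at h1 h2
    rw [← h1, ← h2, hcast]
  have hz : ((f.eval (a p) : ℤ) : ZMod p) = 0 :=
    (ZMod.intCast_zmod_eq_zero_iff_dvd _ _).mpr hdvd
  have hbz : ((p : ℕ) : ℤ) ∣ f.eval (b n) :=
    (ZMod.intCast_zmod_eq_zero_iff_dvd _ _).mp (hcong ▸ hz)
  have hle : ((p : ℕ) : ℤ) ≤ (f.eval (b n)).natAbs := by
    exact_mod_cast Nat.le_of_dvd (Int.natAbs_pos.mpr hn) (Int.natAbs_dvd_natAbs.mpr hbz)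
  rw [← hcdef] at hle
  exact absurd hp2 (not_lt.mpr (by exact_mod_cast hle))
end

section
/- The element (⌊log p⌋ mod p)_p of A is naively transcendental: for every nonzero polynomial f with integer coefficients, there exist infinitely many primes p such that p does not divide f(⌊log p⌋). -/
/-- `(⌊log p⌋ mod p)_p` is naively transcendental: for every nonzero integer
polynomial `f` there are infinitely many primes `p` with `p ∤ f(⌊log p⌋)`. -/
theorem statement3 (f : Polynomial ℤ) (hf : f ≠ 0) :
    {p : ℕ | p.Prime ∧ ¬ (p : ℤ) ∣ f.eval ⌊Real.log p⌋}.Infinite := by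
  set P : Polynomial ℝ := f.map (Int.castRingHom ℝ) with hP
  -- eventually the polynomial is small compared to exp
  have hten : Filter.Tendsto (fun x : ℝ => |P.eval x / Real.exp x|)
      Filter.atTop (nhds 0) := by
    simpa using (P.tendsto_div_exp_atTop).abs
  have hev := hten.eventually_lt_const (by norm_num : (0:ℝ) < 1/2)
  rw [Filter.eventually_atTop] at hev
  obtain ⟨C, hC⟩ := hev
  -- roots of f are bounded
  obtain ⟨B, hB⟩ := (Polynomial.finite_setOf_isRoot hf).bddAbove
  apply Set.infinite_of_forall_exists_gt
  intro N
  -- choose a large n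
  obtain ⟨n₁, hn₁⟩ := exists_nat_ge C
  obtain ⟨n₂, hn₂⟩ := exists_nat_gt B
  set n : ℕ := max (max n₁ n₂) (max N 2) with hn
  have hnC : C ≤ (n : ℝ) := hn₁.trans (by exact_mod_cast le_max_of_le_left (le_max_left _ _))
  have hnB : B < (n : ℤ) := hn₂.trans_le (by exact_mod_cast le_max_of_le_left (le_max_right _ _))
  have hnN : N ≤ n := le_max_of_le_right (le_max_left _ _)
  have hn2 : 2 ≤ n := le_max_of_le_right (le_max_right _ _)
  have hexp_pos : (0:ℝ) < Real.exp n := Real.exp_pos _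
  have hexp3 : (3:ℝ) ≤ Real.exp n := by
    have := Real.add_one_le_exp (n : ℝ)
    have : (2:ℝ) + 1 ≤ (n:ℝ) + 1 := by
      have : (2:ℝ) ≤ n := by exact_mod_cast hn2
      linarith
    linarith [Real.add_one_le_exp (n : ℝ)]
  -- pick a prime by Bertrand
  set m : ℕ := ⌈Real.exp n⌉₊ with hm
  have hm0 : m ≠ 0 := by
    have : (0:ℝ) < Real.exp n := hexp_pos
    positivity
  obtain ⟨p, hp, hmp, hp2m⟩ := Nat.exists_prime_lt_and_le_two_mul m hm0
  have hmn : Real.exp n ≤ (m : ℝ) := Nat.le_ceil _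
  have hpgt : Real.exp n < (p : ℝ) := hmn.trans_lt (by exact_mod_cast hmp)
  have hplt : (p : ℝ) < Real.exp (n + 1) := by
    have h1 : (p : ℝ) ≤ 2 * m := by exact_mod_cast hp2m
    have h2 : (m : ℝ) < Real.exp n + 1 := Nat.ceil_lt_add_one hexp_pos.le
    have h3 : Real.exp ((n : ℝ) + 1) = Real.exp n * Real.exp 1 := by
      rw [Real.exp_add]
    have h4 : (2.7182818283 : ℝ) < Real.exp 1 := Real.exp_one_gt_d9
    nlinarith
  have hppos : (0:ℝ) < p := hexp_pos.trans hpgt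
  -- compute the floor of log p
  have hfloor : ⌊Real.log p⌋ = (n : ℤ) := by
    rw [Int.floor_eq_iff]
    constructor
    · push_cast
      rw [← Real.log_exp (n : ℝ)]
      exact (Real.log_le_log_iff hexp_pos hppos).mpr hpgt.le
    · push_cast
      rw [← Real.log_exp ((n : ℝ) + 1)]
      exact (Real.log_lt_log_iff hppos (Real.exp_pos _)).mpr hplt
  -- f(n) is nonzero
  have hne : f.eval (n : ℤ) ≠ 0 := by
    intro h
    have hmem : (n : ℤ) ∈ {x : ℤ | f.IsRoot x} := h
    exact absurd (hB hmem) (not_le.mpr hnB)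
  -- f(n) is small
  have hsmall : |((f.eval (n : ℤ) : ℤ) : ℝ)| < Real.exp n / 2 := by
    have := hC (n : ℝ) hnC
    have hPe : P.eval ((n : ℤ) : ℝ) = ((f.eval (n : ℤ) : ℤ) : ℝ) := by
      rw [hP]; exact_mod_cast Polynomial.eval_intCast_map (Int.castRingHom ℝ) f (n : ℤ)
    rw [abs_div, div_lt_iff₀ (by simpa using hexp_pos)] at this
    rw [abs_of_pos hexp_pos] at this
    push_cast at hPe ⊢
    rw [← hPe]
    linarith
  refine ⟨p, ⟨hp, ?_⟩, ?_⟩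
  · rw [hfloor]
    intro hdvd
    have h1 : (p : ℤ) ≤ |f.eval (n : ℤ)| :=
      Int.le_of_dvd (abs_pos.mpr hne) ((dvd_abs _ _).mpr hdvd)
    have h2 : ((p : ℤ) : ℝ) ≤ |((f.eval (n : ℤ) : ℤ) : ℝ)| := by
      exact_mod_cast h1
    push_cast at h2
    linarith [hsmall, hpgt]
  · -- p > N
    have : (N : ℝ) < p := by
      have h1 : ((n : ℝ)) + 1 ≤ Real.exp n := Real.add_one_le_exp _
      have h2 : (N : ℝ) ≤ n := by exact_mod_cast hnN
      linarith
    exact_mod_cast this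
end

section
/- Let S be an infinite set of primes and (b_p)_{p∈S} a sequence of integers with b_p → ∞ and b_p = O(p^ε) for some 0 < ε < 1. Assume there exists ε' with ε < ε' < 1 such that #{p ≤ X : p ∈ S} ≫ X^{ε'} for all sufficiently large X. Then for every nonzero polynomial f with integer coefficients, there exist infinitely many p ∈ S with p ∤ f(b_p). -/
set_option maxHeartbeats 1000000


open Filter Asymptotics

-- Lemma A: primes dividing n
lemma auxA (n : ℤ) (hn : n ≠ 0) (s : Finset Nat.Primes)
    (h : ∀ p ∈ s, ((p : ℕ) : ℤ) ∣ n) : s.card ≤ Nat.log 2 n.natAbs := by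
  have hn' : n.natAbs ≠ 0 := Int.natAbs_ne_zero.mpr hn
  have hsub : ∀ p ∈ s, (p : ℕ) ∈ n.natAbs.primeFactors := by
    intro p hp
    refine Nat.mem_primeFactors.mpr ⟨p.2, ?_, hn'⟩
    have := Int.natAbs_dvd_natAbs.mpr (h p hp)
    simpa using this
  have h1 : s.card ≤ n.natAbs.primeFactors.card :=
    Finset.card_le_card_of_injOn (fun p => (p : ℕ)) hsub
      (fun a _ b _ hab => Subtype.ext hab)
  have h2 : 2 ^ n.natAbs.primeFactors.card ≤ n.natAbs := by
    calc 2 ^ n.natAbs.primeFactors.card ≤ ∏ p ∈ n.natAbs.primeFactors, p :=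
          Finset.pow_card_le_prod _ _ _ (fun p hp => (Nat.prime_of_mem_primeFactors hp).two_le)
      _ ≤ n.natAbs := Nat.le_of_dvd (Nat.pos_of_ne_zero hn') (Nat.prod_primeFactors_dvd _)
  exact h1.trans ((Nat.le_log_iff_pow_le one_lt_two hn').mpr h2)

-- Lemma B: polynomial bound
lemma auxB (f : Polynomial ℤ) (v Y : ℤ) (hY : 1 ≤ Y) (hv : |v| ≤ Y) :
    |f.eval v| ≤ (∑ i ∈ Finset.range (f.natDegree + 1), |f.coeff i|) * Y ^ f.natDegree := by
  rw [Polynomial.eval_eq_sum_range]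
  calc |∑ i ∈ Finset.range (f.natDegree + 1), f.coeff i * v ^ i|
      ≤ ∑ i ∈ Finset.range (f.natDegree + 1), |f.coeff i * v ^ i| :=
        Finset.abs_sum_le_sum_abs _ _
    _ ≤ ∑ i ∈ Finset.range (f.natDegree + 1), |f.coeff i| * Y ^ f.natDegree := by
        refine Finset.sum_le_sum fun i hi => ?_
        rw [abs_mul, abs_pow]
        refine mul_le_mul_of_nonneg_left ?_ (abs_nonneg _)
        calc |v| ^ i ≤ Y ^ i := pow_le_pow_left₀ (abs_nonneg v) hv i
          _ ≤ Y ^ f.natDegree := pow_le_pow_right₀ hY (Nat.lt_succ_iff.mp (Finset.mem_range.mp hi))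
    _ = (∑ i ∈ Finset.range (f.natDegree + 1), |f.coeff i|) * Y ^ f.natDegree :=
        (Finset.sum_mul _ _ _).symm

-- Lemma C: asymptotics
lemma auxC {e e' : ℝ} (h : e < e') :
    (fun X : ℝ => X ^ e * Real.log X) =o[atTop] fun X => X ^ e' := by
  have h1 : Real.log =o[atTop] fun x : ℝ => x ^ (e' - e) :=
    isLittleO_log_rpow_atTop (sub_pos.2 h)
  have h2 := (isBigO_refl (fun x : ℝ => x ^ e) atTop).mul_isLittleO h1
  refine h2.trans_isBigO (EventuallyEq.isBigO ?_)
  filter_upwards [eventually_gt_atTop (0:ℝ)] with x hx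
  rw [← Real.rpow_add hx, show e + (e' - e) = e' by ring]

instance : LinearOrder Nat.Primes := inferInstanceAs (LinearOrder {p : ℕ // p.Prime})

/-- Luca–Zudilin's second criterion: let `S` be an infinite set of primes and
`(b_p)_{p ∈ S}` integers with `b_p → ∞` and `b_p = O(p^ε)` for some `0 < ε < 1`.
If `#{p ≤ X : p ∈ S} ≫ X^{ε'}` for some `ε < ε' < 1` and all large `X`, then for
every nonzero integer polynomial `f` there are infinitely many `p ∈ S` with
`p ∤ f(b_p)`. -/
theorem statement4 (S : Set Nat.Primes) (hS : S.Infinite) (b : Nat.Primes → ℤ)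
    (ε : ℝ) (hε0 : 0 < ε) (hε1 : ε < 1)
    (htend : Tendsto b (atTop ⊓ 𝓟 S) atTop)
    (hO : ∃ C : ℝ, ∀ p ∈ S, |(b p : ℝ)| ≤ C * (p : ℝ) ^ ε)
    (hcount : ∃ ε' : ℝ, ε < ε' ∧ ε' < 1 ∧ ∃ c : ℝ, 0 < c ∧
      ∀ᶠ X : ℝ in atTop, c * X ^ ε' ≤ (({p ∈ S | (p : ℝ) ≤ X}).ncard : ℝ))
    (f : Polynomial ℤ) (hf : f ≠ 0) :
    {p ∈ S | ¬ ((p : ℕ) : ℤ) ∣ f.eval (b p)}.Infinite := by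
  classical
  by_contra hcon
  rw [Set.not_infinite] at hcon
  obtain ⟨C, hC⟩ := hO
  obtain ⟨ε', hεε', hε'1, c, hc, hcnt⟩ := hcount
  set C' : ℝ := max C 1 with hC'def
  have hC'1 : (1 : ℝ) ≤ C' := le_max_right _ _
  set d : ℕ := f.natDegree with hd
  set A : ℤ := ∑ i ∈ Finset.range (d + 1), |f.coeff i| with hA
  have hA1 : 1 ≤ A := by
    have hld : f.coeff d ≠ 0 := Polynomial.leadingCoeff_ne_zero.mpr hf
    calc (1 : ℤ) ≤ |f.coeff d| := Int.one_le_abs hld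
      _ ≤ A := Finset.single_le_sum (f := fun i => |f.coeff i|)
          (fun i _ => abs_nonneg _) (Finset.self_mem_range_succ d)
  -- root bound
  obtain ⟨B₀, hB₀⟩ := (Polynomial.finite_setOf_isRoot hf).bddAbove
  set B : ℤ := max B₀ 0 with hB
  have hB0 : 0 ≤ B := le_max_right _ _
  have hroot : ∀ x : ℤ, B < x → f.eval x ≠ 0 := by
    intro x hx hev
    exact absurd (hB₀ (show x ∈ {x : ℤ | f.IsRoot x} from hev))
      (not_le.mpr (lt_of_le_of_lt (le_max_left _ _) hx))
  -- eventually b p > B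
  have hev : ∀ᶠ p in atTop ⊓ 𝓟 S, B < b p := htend.eventually_gt_atTop B
  rw [eventually_inf_principal] at hev
  obtain ⟨q₀, hq₀⟩ := eventually_atTop.mp hev
  have hbadfin : {p : Nat.Primes | p < q₀}.Finite := by
    have hsub : {p : Nat.Primes | p < q₀} ⊆ (fun p : Nat.Primes => (p : ℕ)) ⁻¹' Set.Iio (q₀ : ℕ) := by
      intro p hp
      exact hp
    exact Set.Finite.subset (Set.Finite.preimage (Set.injOn_of_injective (fun a b => Subtype.ext))
      (Set.finite_Iio _)) hsub
  set K₀ : ℝ := ((hcon.toFinset.card + hbadfin.toFinset.card : ℕ) : ℝ) with hK₀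
  have hK₀0 : 0 ≤ K₀ := Nat.cast_nonneg _
  -- main counting bound
  have hmain : ∀ X : ℝ, 1 ≤ X →
      (({p ∈ S | (p : ℝ) ≤ X}).ncard : ℝ) ≤
        K₀ + (C' * X ^ ε + 1) * (2 * Real.log ((A : ℝ) * (C' * X ^ ε + 1) ^ d)) := by
    intro X hX
    have hX0 : (0 : ℝ) < X := lt_of_lt_of_le one_pos hX
    have hXε1 : (1 : ℝ) ≤ X ^ ε := Real.one_le_rpow hX hε0.le
    have hCX1 : (1 : ℝ) ≤ C' * X ^ ε := le_trans hC'1 (le_mul_of_one_le_right (by linarith) hXε1)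
    set Y : ℤ := ⌈C' * X ^ ε⌉ with hYdef
    have hY1 : (1 : ℤ) ≤ Y := by exact_mod_cast le_trans hCX1 (Int.le_ceil _)
    have hYle : (Y : ℝ) ≤ C' * X ^ ε + 1 := le_of_lt (Int.ceil_lt_add_one _)
    -- the finite set P
    have hPfin : {p ∈ S | (p : ℝ) ≤ X}.Finite := by
      have hsub : {p ∈ S | (p : ℝ) ≤ X} ⊆ (fun p : Nat.Primes => (p : ℕ)) ⁻¹' Set.Iic ⌊X⌋₊ := by
        intro p hp
        exact Nat.le_floor hp.2
      exact Set.Finite.subset (Set.Finite.preimage (Set.injOn_of_injective (fun a b => Subtype.ext))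
        (Set.finite_Iic _)) hsub
    set Pf : Finset Nat.Primes := hPfin.toFinset with hPf
    set Good : Finset Nat.Primes :=
      Pf.filter (fun p => q₀ ≤ p ∧ ((p : ℕ) : ℤ) ∣ f.eval (b p)) with hGood
    -- card Pf ≤ card Good + K₀
    have hsplit : Pf ⊆ Good ∪ hbadfin.toFinset ∪ hcon.toFinset := by
      intro p hp
      have hpS : p ∈ S := ((Set.Finite.mem_toFinset _).mp hp).1
      by_cases h1 : p < q₀
      · exact Finset.mem_union.mpr (Or.inl (Finset.mem_union.mpr (Or.inr
          ((Set.Finite.mem_toFinset _).mpr h1))))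
      by_cases h2 : ((p : ℕ) : ℤ) ∣ f.eval (b p)
      · exact Finset.mem_union.mpr (Or.inl (Finset.mem_union.mpr (Or.inl
          (Finset.mem_filter.mpr ⟨hp, not_lt.mp h1, h2⟩))))
      · exact Finset.mem_union.mpr (Or.inr ((Set.Finite.mem_toFinset _).mpr ⟨hpS, h2⟩))
    have hcard1 : Pf.card ≤ Good.card + (hcon.toFinset.card + hbadfin.toFinset.card) := by
      calc Pf.card ≤ (Good ∪ hbadfin.toFinset ∪ hcon.toFinset).card := Finset.card_le_card hsplit
        _ ≤ (Good ∪ hbadfin.toFinset).card + hcon.toFinset.card := Finset.card_union_le _ _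
        _ ≤ Good.card + hbadfin.toFinset.card + hcon.toFinset.card :=
            add_le_add_left (Finset.card_union_le _ _) _
        _ = Good.card + (hcon.toFinset.card + hbadfin.toFinset.card) := by ring
    -- members of Good have b p in Icc 1 Y
    have hbmem : ∀ p ∈ Good, b p ∈ Finset.Icc (1 : ℤ) Y := by
      intro p hp
      obtain ⟨hpPf, hpq₀, hpdvd⟩ := Finset.mem_filter.mp hp
      obtain ⟨hpS, hpX⟩ := (Set.Finite.mem_toFinset _).mp hpPf
      have hBb : B < b p := hq₀ p hpq₀ hpS
      refine Finset.mem_Icc.mpr ⟨by omega, ?_⟩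
      have h1 : (b p : ℝ) ≤ C * (p : ℝ) ^ ε := le_trans (le_abs_self _) (hC p hpS)
      have h2 : (p : ℝ) ^ ε ≤ X ^ ε :=
        Real.rpow_le_rpow (Nat.cast_nonneg _) hpX hε0.le
      have h3 : (b p : ℝ) ≤ C' * X ^ ε := by
        calc (b p : ℝ) ≤ C * (p : ℝ) ^ ε := h1
          _ ≤ C' * X ^ ε := mul_le_mul (le_max_left _ _) h2
              (Real.rpow_nonneg (Nat.cast_nonneg _) _) (by linarith)
      have : (b p : ℝ) ≤ (Y : ℝ) := le_trans h3 (Int.le_ceil _)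
      exact_mod_cast this
    -- fiberwise count
    set N : ℕ := (A * Y ^ d).natAbs with hN
    have hNbound : ∀ v ∈ Finset.Icc (1 : ℤ) Y,
        (Good.filter (fun p => b p = v)).card ≤ Nat.log 2 N := by
      intro v hv
      obtain ⟨hv1, hvY⟩ := Finset.mem_Icc.mp hv
      rcases Finset.eq_empty_or_nonempty (Good.filter (fun p => b p = v)) with he | ⟨p₀, hp₀⟩
      · simp [he]
      obtain ⟨hp₀G, hp₀v⟩ := Finset.mem_filter.mp hp₀
      obtain ⟨hp₀Pf, hp₀q₀, _⟩ := Finset.mem_filter.mp hp₀G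
      have hp₀S : p₀ ∈ S := ((Set.Finite.mem_toFinset _).mp hp₀Pf).1
      have hBv : B < v := hp₀v ▸ hq₀ p₀ hp₀q₀ hp₀S
      have hfv : f.eval v ≠ 0 := hroot v hBv
      have h1 : (Good.filter (fun p => b p = v)).card ≤ Nat.log 2 (f.eval v).natAbs := by
        refine auxA _ hfv _ ?_
        intro q hq
        obtain ⟨hqG, hqv⟩ := Finset.mem_filter.mp hq
        obtain ⟨_, _, hqdvd⟩ := Finset.mem_filter.mp hqG
        exact hqv ▸ hqdvd
      refine h1.trans (Nat.log_mono_right ?_)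
      have habs : |f.eval v| ≤ |A * Y ^ d| := by
        have h2 : |f.eval v| ≤ A * Y ^ d := auxB f v Y hY1 (by rw [abs_of_pos (by omega)]; exact hvY)
        exact h2.trans (le_abs_self _)
      simp only [Int.abs_eq_natAbs] at habs
      exact_mod_cast habs
    have hcard2 : Good.card ≤ Y.toNat * Nat.log 2 N := by
      rw [Finset.card_eq_sum_card_fiberwise hbmem]
      calc ∑ v ∈ Finset.Icc (1 : ℤ) Y, (Good.filter (fun p => b p = v)).card
          ≤ ∑ v ∈ Finset.Icc (1 : ℤ) Y, Nat.log 2 N := Finset.sum_le_sum hNbound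
        _ = (Finset.Icc (1 : ℤ) Y).card * Nat.log 2 N := by rw [Finset.sum_const, smul_eq_mul]
        _ = Y.toNat * Nat.log 2 N := by rw [Int.card_Icc]; norm_num
    -- convert to reals
    have hncard : ({p ∈ S | (p : ℝ) ≤ X}).ncard = Pf.card :=
      Set.ncard_eq_toFinset_card _ hPfin
    rw [hncard]
    have hY0 : (0 : ℤ) ≤ Y := by linarith
    have hYtoNat : (Y.toNat : ℝ) ≤ C' * X ^ ε + 1 := by
      have h := Int.toNat_of_nonneg hY0
      have : ((Y.toNat : ℤ) : ℝ) ≤ C' * X ^ ε + 1 := by rw [h]; exact hYle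
      exact_mod_cast this
    have hlog2 : (0.6931471803 : ℝ) < Real.log 2 := Real.log_two_gt_d9
    have hA1r : (1 : ℝ) ≤ (A : ℝ) := by exact_mod_cast hA1
    have hA0r : (0 : ℝ) ≤ (A : ℝ) := by linarith
    have hY1r : (1 : ℝ) ≤ (Y : ℝ) := by exact_mod_cast hY1
    have hY0r : (0 : ℝ) ≤ (Y : ℝ) := by linarith
    have hNval : (N : ℝ) = (A : ℝ) * (Y : ℝ) ^ d := by
      have h0 : (0 : ℤ) ≤ A * Y ^ d :=
        mul_nonneg (by linarith) (pow_nonneg (by linarith) d)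
      have hNz : ((N : ℕ) : ℤ) = A * Y ^ d := by rw [hN]; exact Int.natAbs_of_nonneg h0
      calc ((N : ℕ) : ℝ) = (((N : ℕ) : ℤ) : ℝ) := by push_cast; ring
        _ = (A : ℝ) * (Y : ℝ) ^ d := by rw [hNz]; push_cast; ring
    have hAY1 : (1 : ℝ) ≤ (A : ℝ) * (Y : ℝ) ^ d :=
      one_le_mul_of_one_le_of_one_le hA1r (one_le_pow₀ hY1r)
    have hlogN : (Nat.log 2 N : ℝ) ≤ 2 * Real.log ((A : ℝ) * (C' * X ^ ε + 1) ^ d) := by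
      have h1 : (Nat.log 2 N : ℝ) ≤ Real.logb 2 N := Real.natLog_le_logb N 2
      rw [Real.logb, hNval] at h1
      have hlognn : 0 ≤ Real.log ((A : ℝ) * (Y : ℝ) ^ d) := Real.log_nonneg hAY1
      have h2 : Real.log ((A : ℝ) * (Y : ℝ) ^ d) / Real.log 2 ≤
          2 * Real.log ((A : ℝ) * (Y : ℝ) ^ d) := by
        rw [div_le_iff₀ (by linarith)]
        nlinarith
      have h3 : Real.log ((A : ℝ) * (Y : ℝ) ^ d) ≤
          Real.log ((A : ℝ) * (C' * X ^ ε + 1) ^ d) := by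
        refine Real.log_le_log (by nlinarith) ?_
        exact mul_le_mul_of_nonneg_left (pow_le_pow_left₀ hY0r hYle d) hA0r
      linarith
    -- assemble
    have hlognn2 : (0 : ℝ) ≤ Real.log ((A : ℝ) * (C' * X ^ ε + 1) ^ d) := by
      refine Real.log_nonneg ?_
      have : (1 : ℝ) ≤ (C' * X ^ ε + 1) ^ d := one_le_pow₀ (by linarith)
      nlinarith
    calc ((Pf.card : ℕ) : ℝ) ≤ ((Good.card : ℕ) : ℝ) + K₀ := by
          rw [hK₀]; exact_mod_cast hcard1
      _ ≤ ((Y.toNat : ℕ) : ℝ) * ((Nat.log 2 N : ℕ) : ℝ) + K₀ := by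
          have : ((Good.card : ℕ) : ℝ) ≤ ((Y.toNat * Nat.log 2 N : ℕ) : ℝ) := by
            exact_mod_cast hcard2
          push_cast at this ⊢
          linarith
      _ ≤ (C' * X ^ ε + 1) * (2 * Real.log ((A : ℝ) * (C' * X ^ ε + 1) ^ d)) + K₀ := by
          refine add_le_add_left (mul_le_mul hYtoNat hlogN (Nat.cast_nonneg _) (by linarith)) _
      _ = K₀ + (C' * X ^ ε + 1) * (2 * Real.log ((A : ℝ) * (C' * X ^ ε + 1) ^ d)) := by ring
  -- asymptotic contradiction
  have hA1r : (1 : ℝ) ≤ (A : ℝ) := by exact_mod_cast hA1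
  have hlogA : 0 ≤ Real.log A := Real.log_nonneg hA1r
  have hlog2C' : 0 ≤ Real.log (2 * C') := Real.log_nonneg (by linarith)
  set Kc : ℝ := Real.log A + d * Real.log (2 * C') + d * ε with hKcdef
  have hdε : (0 : ℝ) ≤ (d : ℝ) * ε := mul_nonneg (Nat.cast_nonneg _) hε0.le
  have hKc0 : 0 ≤ Kc := by
    have : (0 : ℝ) ≤ (d : ℝ) * Real.log (2 * C') := mul_nonneg (Nat.cast_nonneg _) hlog2C'
    simp only [hKcdef]; linarith
  set M : ℝ := K₀ + 4 * C' * Kc with hMdef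
  set g : ℝ → ℝ :=
    fun X => K₀ + (C' * X ^ ε + 1) * (2 * Real.log ((A : ℝ) * (C' * X ^ ε + 1) ^ d)) with hg
  have hbigO : g =O[atTop] fun X => X ^ ε * Real.log X := by
    refine IsBigO.of_bound M ?_
    filter_upwards [eventually_ge_atTop (Real.exp 1)] with X hX
    have hX1 : (1 : ℝ) ≤ X := le_trans (Real.one_le_exp zero_le_one) hX
    have hX0 : (0 : ℝ) < X := lt_of_lt_of_le one_pos hX1
    have hlogX : 1 ≤ Real.log X := by
      rw [Real.le_log_iff_exp_le hX0]; exact hX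
    have hXε1 : (1 : ℝ) ≤ X ^ ε := Real.one_le_rpow hX1 hε0.le
    have hXε0 : (0 : ℝ) < X ^ ε := lt_of_lt_of_le one_pos hXε1
    have hCX1 : (1 : ℝ) ≤ C' * X ^ ε := le_trans hC'1 (le_mul_of_one_le_right (by linarith) hXε1)
    have ht3 : C' * X ^ ε + 1 ≤ 2 * (C' * X ^ ε) := by linarith
    set L : ℝ := Real.log ((A : ℝ) * (C' * X ^ ε + 1) ^ d) with hL
    have harg1 : (1 : ℝ) ≤ (A : ℝ) * (C' * X ^ ε + 1) ^ d := by
      have h1 : (1 : ℝ) ≤ (C' * X ^ ε + 1) ^ d := one_le_pow₀ (by linarith)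
      nlinarith
    have hLnn : 0 ≤ L := Real.log_nonneg harg1
    have ht4 : L ≤ Kc * Real.log X := by
      have e1 : L ≤ Real.log ((A : ℝ) * (2 * (C' * X ^ ε)) ^ d) := by
        refine Real.log_le_log (by linarith) ?_
        refine mul_le_mul_of_nonneg_left (pow_le_pow_left₀ (by linarith) ht3 d) (by linarith)
      have e2 : Real.log ((A : ℝ) * (2 * (C' * X ^ ε)) ^ d)
          = Real.log A + d * (Real.log (2 * C') + ε * Real.log X) := by
        rw [show (2 : ℝ) * (C' * X ^ ε) = (2 * C') * X ^ ε by ring]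
        rw [Real.log_mul (by linarith) (pow_ne_zero d (by nlinarith)), Real.log_pow,
          Real.log_mul (by linarith) (by linarith), Real.log_rpow hX0]
      have e3 : Real.log A + d * (Real.log (2 * C') + ε * Real.log X) ≤ Kc * Real.log X := by
        simp only [hKcdef]
        nlinarith [mul_nonneg hlogA (by linarith : (0:ℝ) ≤ Real.log X - 1),
          mul_nonneg (mul_nonneg (Nat.cast_nonneg (α := ℝ) d) hlog2C')
            (by linarith : (0:ℝ) ≤ Real.log X - 1)]
      calc L ≤ Real.log ((A : ℝ) * (2 * (C' * X ^ ε)) ^ d) := e1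
        _ = Real.log A + d * (Real.log (2 * C') + ε * Real.log X) := e2
        _ ≤ Kc * Real.log X := e3
    have hgnn : 0 ≤ g X := by
      have : 0 ≤ (C' * X ^ ε + 1) * (2 * L) := mul_nonneg (by linarith) (by linarith)
      simp only [hg]; linarith
    have hrhsnn : (0 : ℝ) ≤ X ^ ε * Real.log X := mul_nonneg (by linarith) (by linarith)
    rw [Real.norm_eq_abs, Real.norm_eq_abs, abs_of_nonneg hgnn, abs_of_nonneg hrhsnn]
    have hXεL1 : (1 : ℝ) ≤ X ^ ε * Real.log X := one_le_mul_of_one_le_of_one_le hXε1 hlogX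
    calc g X = K₀ + (C' * X ^ ε + 1) * (2 * L) := rfl
      _ ≤ K₀ * (X ^ ε * Real.log X) + (2 * (C' * X ^ ε)) * (2 * (Kc * Real.log X)) := by
          have b1 : (C' * X ^ ε + 1) * (2 * L) ≤ (2 * (C' * X ^ ε)) * (2 * (Kc * Real.log X)) :=
            mul_le_mul ht3 (by linarith) (by linarith) (by linarith)
          have b2 : K₀ ≤ K₀ * (X ^ ε * Real.log X) := le_mul_of_one_le_right hK₀0 hXεL1
          linarith
      _ = (K₀ + 4 * C' * Kc) * (X ^ ε * Real.log X) := by ring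
      _ = M * (X ^ ε * Real.log X) := by rw [hMdef]
  have hlittle : g =o[atTop] fun X => X ^ ε' := hbigO.trans_isLittleO (auxC hεε')
  have hsmall := hlittle.def (half_pos hc)
  obtain ⟨X, hcntX, hsmallX, hX1⟩ := (hcnt.and (hsmall.and (eventually_ge_atTop 1))).exists
  have hX0 : (0 : ℝ) < X := lt_of_lt_of_le one_pos hX1
  have hXε'pos : (0 : ℝ) < X ^ ε' := Real.rpow_pos_of_pos hX0 _
  have hm := hmain X hX1
  have hfin : g X ≤ c / 2 * (X ^ ε') := by
    have := hsmallX
    rw [Real.norm_eq_abs, Real.norm_eq_abs, abs_of_pos hXε'pos] at this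
    exact (le_abs_self _).trans this
  have : c * X ^ ε' ≤ g X := le_trans hcntX hm
  nlinarith
end

section
/- The element (⌊√p⌋ mod p)_p of A is naively transcendental: for every nonzero polynomial f with integer coefficients, there exist infinitely many primes p such that p ∤ f(⌊√p⌋). -/
open Finset Polynomial

private lemma sq_lt_two_pow (t : ℕ) (ht : 5 ≤ t) : t * t < 2 ^ t := by
  induction t, ht using Nat.le_induction with
  | base => norm_num
  | succ n hn ih =>
    have h2 : 2 * n + 1 ≤ n * n := by nlinarith
    have h3 : 2 ^ (n + 1) = 2 ^ n + 2 ^ n := by ring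
    nlinarith [ih]

private lemma chebyshev (n : ℕ) (hn : 4 ≤ n) :
    2 ^ (2 * n) < (2 * n) ^ (((Finset.range (2 * n + 1)).filter Nat.Prime).card + 1) := by
  set π := ((Finset.range (2 * n + 1)).filter Nat.Prime).card with hπ
  have h0 : Nat.centralBinom n ≠ 0 := (Nat.centralBinom_pos n).ne'
  have key : Nat.centralBinom n ≤ (2 * n) ^ π := by
    have hsub : (Nat.centralBinom n).primeFactors ⊆
        (Finset.range (2 * n + 1)).filter Nat.Prime := by
      intro p hp
      have hpp : p.Prime := Nat.prime_of_mem_primeFactors hp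
      have hν : 0 < (Nat.centralBinom n).factorization p :=
        Nat.Prime.factorization_pos_of_dvd hpp h0 (Nat.dvd_of_mem_primeFactors hp)
      have hple : p ^ (Nat.centralBinom n).factorization p ≤ 2 * n :=
        Nat.pow_factorization_choose_le (by omega)
      have : p ≤ p ^ (Nat.centralBinom n).factorization p :=
        Nat.le_self_pow hν.ne' p
      exact Finset.mem_filter.mpr ⟨Finset.mem_range.mpr (by omega), hpp⟩
    calc Nat.centralBinom n
        = ∏ p ∈ (Nat.centralBinom n).primeFactors,
            p ^ (Nat.centralBinom n).factorization p := by
          rw [← Nat.support_factorization]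
          exact (Nat.factorization_prod_pow_eq_self h0).symm
      _ ≤ (2 * n) ^ (Nat.centralBinom n).primeFactors.card :=
          Finset.prod_le_pow_card _ _ _ (fun p _ =>
            Nat.pow_factorization_choose_le (by omega))
      _ ≤ (2 * n) ^ π :=
          Nat.pow_le_pow_right (by omega) (Finset.card_le_card hsub)
  have h4 : 4 ^ n < n * Nat.centralBinom n := Nat.four_pow_lt_mul_centralBinom n hn
  calc 2 ^ (2 * n) = 4 ^ n := by rw [pow_mul]; norm_num
    _ < n * Nat.centralBinom n := h4
    _ ≤ (2 * n) * (2 * n) ^ π := by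
        exact Nat.mul_le_mul (by omega) key
    _ = (2 * n) ^ (π + 1) := by ring

private lemma eval_bound (f : Polynomial ℤ) (n : ℕ) (hn : 1 ≤ n) :
    (f.eval (n : ℤ)).natAbs ≤
      (∑ i ∈ Finset.range (f.natDegree + 1), (f.coeff i).natAbs) * n ^ f.natDegree := by
  have h : |f.eval (n : ℤ)| ≤
      (∑ i ∈ Finset.range (f.natDegree + 1), |f.coeff i|) * (n : ℤ) ^ f.natDegree := by
    rw [Polynomial.eval_eq_sum_range]
    calc |∑ i ∈ Finset.range (f.natDegree + 1), f.coeff i * (n : ℤ) ^ i|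
        ≤ ∑ i ∈ Finset.range (f.natDegree + 1), |f.coeff i * (n : ℤ) ^ i| :=
          Finset.abs_sum_le_sum_abs _ _
      _ ≤ ∑ i ∈ Finset.range (f.natDegree + 1), |f.coeff i| * (n : ℤ) ^ f.natDegree := by
          apply Finset.sum_le_sum
          intro i hi
          rw [abs_mul, abs_pow, abs_of_nonneg (by positivity : (0 : ℤ) ≤ (n : ℤ))]
          exact mul_le_mul_of_nonneg_left
            (pow_le_pow_right₀ (by exact_mod_cast hn)
              (Nat.lt_succ_iff.mp (Finset.mem_range.mp hi))) (abs_nonneg _)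
      _ = _ := (Finset.sum_mul _ _ _).symm
  have hcast : ((f.eval (n : ℤ)).natAbs : ℤ) ≤
      (((∑ i ∈ Finset.range (f.natDegree + 1), (f.coeff i).natAbs) * n ^ f.natDegree : ℕ) : ℤ) := by
    push_cast [Int.natCast_natAbs]
    exact h
  exact_mod_cast hcast

private lemma fiber_card_le (d n m : ℕ) (hn : 2 ≤ n) (hm : 0 < m)
    (hmle : m ≤ n ^ (d + 1)) (s : Finset ℕ)
    (hs : ∀ p ∈ s, Nat.Prime p ∧ n * n < p ∧ p ∣ m) : s.card ≤ d + 1 := by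
  have hprod : (∏ p ∈ s, p) ∣ m :=
    Finset.prod_primes_dvd m (fun p hp => (hs p hp).1.prime) (fun p hp => (hs p hp).2.2)
  have h1 : (n * n) ^ s.card ≤ ∏ p ∈ s, p :=
    Finset.pow_card_le_prod s _ _ (fun p hp => le_of_lt (hs p hp).2.1)
  have h2 : (∏ p ∈ s, p) ≤ m := Nat.le_of_dvd hm hprod
  have h3 : n ^ (2 * s.card) ≤ n ^ (d + 1) := by
    calc n ^ (2 * s.card) = (n * n) ^ s.card := by rw [two_mul, pow_add, mul_pow]
      _ ≤ m := le_trans h1 h2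
      _ ≤ n ^ (d + 1) := hmle
  have h4 : 2 * s.card ≤ d + 1 := (Nat.pow_le_pow_iff_right hn).mp h3
  omega

/-- `(⌊√p⌋ mod p)_p` is naively transcendental: for every nonzero integer
polynomial `f` there are infinitely many primes `p` with `p ∤ f(⌊√p⌋)`. -/
theorem statement5 (f : Polynomial ℤ) (hf : f ≠ 0) :
    {p : ℕ | p.Prime ∧ ¬ (p : ℤ) ∣ f.eval (Nat.sqrt p : ℤ)}.Infinite := by
  by_contra hinf
  rw [Set.not_infinite] at hinf
  obtain ⟨N, hN⟩ := hinf.bddAbove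
  -- every prime `p > N` divides `f(⌊√p⌋)`
  have hdvd : ∀ p : ℕ, p.Prime → N < p → (p : ℤ) ∣ f.eval (Nat.sqrt p : ℤ) := by
    intro p hp hNp
    by_contra hnd
    exact absurd (hN ⟨hp, hnd⟩) (by omega)
  -- bound for roots
  have hroots : {n : ℕ | f.eval (n : ℤ) = 0}.Finite := by
    have : {n : ℕ | f.eval (n : ℤ) = 0} = (fun n : ℕ => (n : ℤ)) ⁻¹' {x | f.IsRoot x} := rfl
    rw [this]
    exact (Polynomial.finite_setOf_isRoot hf).preimage
      (Set.injOn_of_injective Nat.cast_injective)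
  obtain ⟨M₀, hM₀⟩ := hroots.bddAbove
  set d := f.natDegree with hd
  set C := ∑ i ∈ Finset.range (d + 1), (f.coeff i).natAbs with hC
  set M := M₀ + C + 2 with hM
  set R := N + M * M with hR
  set c := R + d + 2 with hc
  set t := 8 * c + 5 with ht
  set x := 2 ^ t with hx
  -- counting upper bound
  set P := (Finset.range (x * x + 1)).filter Nat.Prime with hP
  have hmaps : ∀ p ∈ P, Nat.sqrt p ∈ Finset.range (x + 1) := by
    · intro p hp
      have hple : p ≤ x * x := by
        have := Finset.mem_range.mp (Finset.mem_filter.mp hp).1; omega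
      have : Nat.sqrt p ≤ Nat.sqrt (x * x) := Nat.sqrt_le_sqrt hple
      rw [← pow_two, Nat.sqrt_eq'] at this
      exact Finset.mem_range.mpr (by omega)
  have hfib : ∀ b ∈ Finset.range (x + 1),
      (P.filter (fun p => Nat.sqrt p = b)).card ≤ c := by
    · intro b _
      set Q := P.filter (fun p => Nat.sqrt p = b) with hQ
      have hsplit : (Q.filter (fun p => p ≤ R)).card
          + (Q.filter (fun p => ¬ p ≤ R)).card = Q.card :=
        Finset.card_filter_add_card_filter_not _
      have hsmall : (Q.filter (fun p => p ≤ R)).card ≤ R + 1 := by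
        apply le_trans (Finset.card_le_card (t := Finset.range (R + 1)) ?_)
          (by simp [Finset.card_range])
        intro p hp
        exact Finset.mem_range.mpr (by
          have := (Finset.mem_filter.mp hp).2; omega)
      have hbig : (Q.filter (fun p => ¬ p ≤ R)).card ≤ d + 1 := by
        set s := Q.filter (fun p => ¬ p ≤ R) with hs
        rcases s.eq_empty_or_nonempty with he | ⟨q, hq⟩
        · simp [he]
        -- basic facts about elements of `s`
        have hmem : ∀ p ∈ s, p.Prime ∧ Nat.sqrt p = b ∧ R < p := by
          intro p hp
          have h1 := Finset.mem_filter.mp hp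
          have h2 := Finset.mem_filter.mp h1.1
          have h3 := Finset.mem_filter.mp h2.1
          exact ⟨h3.2, h2.2, by omega⟩
        obtain ⟨hqp, hqb, hqR⟩ := hmem q hq
        have hbM : M ≤ b := by
          rw [← hqb]
          exact Nat.le_sqrt'.mpr (by rw [pow_two]; omega)
        have hb2 : 2 ≤ b := by omega
        have hbe : f.eval (b : ℤ) ≠ 0 := by
          intro h0
          exact absurd (hM₀ h0) (by omega)
        have hm0 : 0 < (f.eval (b : ℤ)).natAbs := Int.natAbs_pos.mpr hbe
        have hmle : (f.eval (b : ℤ)).natAbs ≤ b ^ (d + 1) := by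
          calc (f.eval (b : ℤ)).natAbs ≤ C * b ^ d := eval_bound f b (by omega)
            _ ≤ b * b ^ d := Nat.mul_le_mul_right _ (by omega)
            _ = b ^ (d + 1) := by ring
        apply fiber_card_le d b _ hb2 hm0 hmle
        intro p hp
        obtain ⟨hpp, hpb, hpR⟩ := hmem p hp
        refine ⟨hpp, ?_, ?_⟩
        · -- b * b < p
          have hle : b * b ≤ p := by
            have h := Nat.sqrt_le' p
            rw [hpb, pow_two] at h; exact h
          rcases lt_or_eq_of_le hle with h | h
          · exact h
          · exfalso
            rcases (Nat.Prime.eq_one_or_self_of_dvd hpp b ⟨b, h.symm⟩) with h1 | h1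
            · omega
            · have : b * 1 = b * b := by rw [← h1] at h; omega
              have := Nat.eq_of_mul_eq_mul_left (by omega : 0 < b) this
              omega
        · -- p ∣ natAbs
          have hdv : (p : ℤ) ∣ f.eval ((Nat.sqrt p : ℕ) : ℤ) :=
            hdvd p hpp (by omega)
          rw [hpb] at hdv
          have := Int.natAbs_dvd_natAbs.mpr hdv
          simpa using this
      omega
  have hcount := Finset.card_le_mul_card_image_of_maps_to hmaps c hfib
  rw [Finset.card_range] at hcount
  -- Chebyshev lower bound
  set n₀ := 2 ^ (2 * t - 1) with hn₀
  have h2n₀ : 2 * n₀ = x * x := by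
    rw [hn₀, hx, ← pow_succ']
    have : 2 * t - 1 + 1 = t + t := by omega
    rw [this, pow_add]
  have hn₀4 : 4 ≤ n₀ := by
    calc 4 = 2 ^ 2 := by norm_num
      _ ≤ 2 ^ (2 * t - 1) := Nat.pow_le_pow_right (by omega) (by omega)
  have hcheb := chebyshev n₀ hn₀4
  rw [h2n₀] at hcheb
  -- rewrite the prime-set as P
  have hxx : x * x = 2 ^ (2 * t) := by rw [hx, ← pow_add]; ring_nf
  rw [hP] at hcount
  have hcheb2 : 2 ^ (2 ^ (2 * t)) < (2 ^ (2 * t)) ^ (P.card + 1) := by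
    rw [hP, ← hxx]; exact hcheb
  rw [← pow_mul] at hcheb2
  have hexp : 2 ^ (2 * t) < 2 * t * (P.card + 1) :=
    (Nat.pow_lt_pow_iff_right (by omega)).mp hcheb2
  -- final arithmetic contradiction
  rw [← hxx] at hexp
  rw [← hP] at hcount
  have hc2 : 2 ≤ c := by omega
  have hx1 : 1 ≤ x := Nat.one_le_two_pow
  have hstep : x * x < (8 * t * c) * x := by
    calc x * x < 2 * t * (P.card + 1) := hexp
      _ ≤ 2 * t * (c * (x + 1) + 1) := by
          apply Nat.mul_le_mul_left; omega
      _ ≤ 2 * t * (2 * c * (x + 1)) := by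
          apply Nat.mul_le_mul_left; nlinarith
      _ ≤ 2 * t * (2 * c * (2 * x)) := by
          apply Nat.mul_le_mul_left
          apply Nat.mul_le_mul_left; omega
      _ = (8 * t * c) * x := by ring
  have hxlt : x < 8 * t * c := Nat.lt_of_mul_lt_mul_right hstep
  have htt : 8 * t * c ≤ t * t := by
    calc 8 * t * c = (8 * c) * t := by ring
      _ ≤ t * t := Nat.mul_le_mul (by omega) (le_refl t)
  have := sq_lt_two_pow t (by omega)
  omega
end

section
/- Let q be a rational number and p a prime such that q and q−1 are both p-adic units or q ≡ 1 (mod p). Then for 0 ≤ k ≤ p−1, the q-binomial coefficient C(p−1, k)_q satisfies: C(p−1,k)_q ≡ C(I_p(q), k/ord_p(q)) (mod p) if ord_p(q) divides k, and C(p−1,k)_q ≡ 0 (mod p) otherwise. Here ord_p(q) is the multiplicative order of q mod p and I_p(q) = (p−1)/ord_p(q). -/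
/-- Congruence of rationals modulo a prime `p`, as a congruence in `ℤ_(p)`:
`x ≡ y (mod p)` iff `x = y` or the `p`-adic valuation of `x - y` is positive. -/
def RatModEqP (p : ℕ) (x y : ℚ) : Prop := x = y ∨ 0 < padicValRat p (x - y)

/-- The reduction of a rational number modulo `p` (meaningful when the rational
is a `p`-adic unit). -/
def ratRed (p : ℕ) (q : ℚ) : ZMod p := (q.num : ZMod p) * ((q.den : ZMod p))⁻¹

/-- The multiplicative order `ord_p(q)` of `q mod p`. -/
noncomputable def ordP (p : ℕ) (q : ℚ) : ℕ := orderOf (ratRed p q)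

/-- The `q`-binomial (Gaussian binomial) coefficient `C(n,k)_q` as a polynomial
in `ℤ[q]`, via the Pascal-type recurrence `C(n+1,k+1)_q = q^(k+1) C(n,k+1)_q + C(n,k)_q`. -/
noncomputable def qBinom : ℕ → ℕ → Polynomial ℤ
  | _, 0 => 1
  | 0, _ + 1 => 0
  | n + 1, k + 1 => qBinom n (k + 1) * Polynomial.X ^ (k + 1) + qBinom n k

open Polynomial

lemma qb_zero (n : ℕ) : qBinom n 0 = 1 := by cases n <;> rfl

lemma qb_succ (n k : ℕ) : qBinom (n+1) (k+1) = qBinom n (k+1) * X ^ (k+1) + qBinom n k := rfl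

lemma qb_gt : ∀ n k : ℕ, n < k → qBinom n k = 0 := by
  intro n
  induction n with
  | zero => intro k h; cases k with
    | zero => omega
    | succ k => rfl
  | succ n ih =>
    intro k h
    cases k with
    | zero => omega
    | succ k => rw [qb_succ, ih (k+1) (by omega), ih k (by omega)]; ring
    
lemma qb_self : ∀ n : ℕ, qBinom n n = 1 := by
  intro n
  induction n with
  | zero => rfl
  | succ n ih => rw [qb_succ, qb_gt n (n+1) (by omega), ih]; ring

lemma qb_PI : ∀ n j : ℕ, (1 - X^(j+1)) * qBinom n (j+1) = (1 - (X:Polynomial ℤ)^(n-j)) * qBinom n j := by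
  intro n
  induction n with
  | zero =>
    intro j
    rw [qb_gt 0 (j+1) (by omega)]
    simp
  | succ n ih =>
    intro j
    cases j with
    | zero =>
      rw [qb_succ, qb_zero, qb_zero, mul_add,
        show (1 - X^1) * (qBinom n 1 * X^1) = ((1-X^(0+1)) * qBinom n (0+1)) * X^1 by ring,
        ih 0, qb_zero]
      simp only [Nat.sub_zero, pow_succ, pow_one]
      ring
    | succ i =>
      by_cases hni : n < i + 1
      · rw [qb_gt (n+1) (i+1+1) (by omega)]
        rcases Nat.lt_or_ge (n+1) (i+1) with h | h
        · rw [qb_gt (n+1) (i+1) h]; ring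
        · rw [← h.antisymm (by omega), qb_self, Nat.sub_self]; simp
      · -- main case i+1 ≤ n
        rw [qb_succ n (i+1), qb_succ n i, mul_add, mul_add,
          show (1 - X^(i+1+1)) * (qBinom n (i+1+1) * X^(i+1+1))
            = ((1 - X^(i+1+1)) * qBinom n (i+1+1)) * X^(i+1+1) by ring,
          ih (i+1)]
        have h1 : (1 - (X:Polynomial ℤ)^(i+1)) * qBinom n (i+1) = (1 - X^(n-i)) * qBinom n i := ih i
        have e1 : n - (i+1) + (i+1+1) = n + 1 := by omega
        have e2 : n - i + (i + 1) = n + 1 := by omega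
        have e3 : n + 1 - (i + 1) = n - i := by omega
        calc (1 - (X:Polynomial ℤ)^(n-(i+1))) * qBinom n (i+1) * X^(i+1+1) + (1 - X^(i+1+1)) * qBinom n (i+1)
            = (X^(i+1+1) - X^(n-(i+1)+(i+1+1)) + 1 - X^(i+1+1)) * qBinom n (i+1) := by rw [pow_add]; ring
          _ = (1 - X^(n+1)) * qBinom n (i+1) := by rw [e1]; ring
          _ = (X^(i+1) - X^(n-i+(i+1)) + 1 - X^(i+1)) * qBinom n (i+1) := by rw [e2]; ring
          _ = (1 - X^(n-i)) * (qBinom n (i+1) * X^(i+1)) + ((1-X^(i+1)) * qBinom n (i+1)) := by rw [pow_add]; ring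
          _ = (1 - X^(n+1-(i+1))) * (qBinom n (i+1) * X^(i+1)) + (1 - X^(n+1-(i+1))) * qBinom n i := by rw [h1, e3]

section fieldpart

variable {F : Type*} [Field F]

lemma a_ne_zero (a : F) (d : ℕ) (hd : 0 < d) (had : a ^ d = 1) : a ≠ 0 := by
  intro h; rw [h, zero_pow (by omega)] at had; exact zero_ne_one had

lemma qb_ratio (a : F) (d : ℕ) (hd : 0 < d) (had : a ^ d = 1)
    (hprim : ∀ j, 0 < j → j < d → a ^ j ≠ 1) (j : ℕ) (hj0 : 0 < j) (hjd : j < d) :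
    (Polynomial.aeval a (qBinom (d-1) j)) * a ^ j = - Polynomial.aeval a (qBinom (d-1) (j-1)) := by
  obtain ⟨i, rfl⟩ : ∃ i, j = i + 1 := ⟨j - 1, by omega⟩
  rw [Nat.add_sub_cancel]
  have PI := congrArg (Polynomial.aeval a) (qb_PI (d-1) i)
  simp only [map_mul, map_sub, map_one, map_pow, Polynomial.aeval_X] at PI
  rw [show d - 1 - i = d - (i+1) by omega] at PI
  have hne : (1:F) - a^(i+1) ≠ 0 := by
    intro h
    exact hprim (i+1) (by omega) hjd (sub_eq_zero.mp h).symm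
  have hkey : a^(i+1) * (1 - a^(d-(i+1))) = -(1 - a^(i+1)) := by
    have : a^(i+1) * a^(d-(i+1)) = 1 := by
      rw [← pow_add, show i+1+(d-(i+1)) = d by omega, had]
    rw [mul_sub, this]; ring
  have h2 : (1 - a^(i+1)) * (Polynomial.aeval a (qBinom (d-1) (i+1)) * a^(i+1))
      = (1 - a^(i+1)) * (- Polynomial.aeval a (qBinom (d-1) i)) := by
    calc (1 - a^(i+1)) * (Polynomial.aeval a (qBinom (d-1) (i+1)) * a^(i+1))
        = ((1 - a^(i+1)) * Polynomial.aeval a (qBinom (d-1) (i+1))) * a^(i+1) := by ring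
      _ = ((1 - a^(d-(i+1))) * Polynomial.aeval a (qBinom (d-1) i)) * a^(i+1) := by rw [PI]
      _ = (a^(i+1) * (1 - a^(d-(i+1)))) * Polynomial.aeval a (qBinom (d-1) i) := by ring
      _ = (-(1 - a^(i+1))) * Polynomial.aeval a (qBinom (d-1) i) := by rw [hkey]
      _ = (1 - a^(i+1)) * (- Polynomial.aeval a (qBinom (d-1) i)) := by ring
  exact mul_left_cancel₀ hne h2

lemma div_mod_succ_pos (d n : ℕ) (hd : 0 < d) (h : (n+1) % d ≠ 0) :
    (n+1) % d = n % d + 1 ∧ (n+1) / d = n / d := by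
  by_cases he : n % d + 1 = d
  · exfalso
    have h1 := Nat.div_add_mod n d
    have : n + 1 = d * (n/d + 1) := by rw [Nat.mul_add]; omega
    rw [this, Nat.mul_mod_right] at h; exact h rfl
  · have hlt : n % d + 1 < d := by have := Nat.mod_lt n hd; omega
    have h1 : (n+1) / d = n / d ∧ (n+1) % d = n % d + 1 :=
      (Nat.div_mod_unique hd).mpr ⟨by have := Nat.div_add_mod n d; omega, hlt⟩
    exact ⟨h1.2, h1.1⟩

lemma div_mod_succ_zero (d n : ℕ) (hd : 0 < d) (h : (n+1) % d = 0) :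
    n % d = d - 1 ∧ (n+1) / d = n / d + 1 := by
  obtain ⟨c, hc⟩ : d ∣ (n+1) := Nat.dvd_of_mod_eq_zero h
  have hc1 : 0 < c := by
    rcases Nat.eq_zero_or_pos c with rfl | h0
    · rw [Nat.mul_zero] at hc; omega
    · exact h0
  obtain ⟨c', rfl⟩ : ∃ c', c = c' + 1 := ⟨c - 1, by omega⟩
  rw [Nat.mul_add, Nat.mul_one] at hc
  have h1 : n / d = c' ∧ n % d = d - 1 := (Nat.div_mod_unique hd).mpr ⟨by omega, by omega⟩
  have h2 : (n+1) / d = c' + 1 ∧ (n+1) % d = 0 :=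
    (Nat.div_mod_unique hd).mpr ⟨by rw [Nat.mul_add, Nat.mul_one]; omega, by omega⟩
  rw [h1.1, h2.1]
  exact ⟨h1.2, rfl⟩

lemma qLucas (a : F) (d : ℕ) (hd : 0 < d) (had : a ^ d = 1)
    (hprim : ∀ j, 0 < j → j < d → a ^ j ≠ 1) : ∀ n k : ℕ,
    Polynomial.aeval a (qBinom n k)
      = (Nat.choose (n/d) (k/d) : F) * Polynomial.aeval a (qBinom (n % d) (k % d)) := by
  intro n
  induction n with
  | zero =>
    intro k
    rcases Nat.eq_zero_or_pos k with rfl | hk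
    · simp [qb_zero]
    · rw [qb_gt 0 k hk, Nat.zero_mod, Nat.zero_div, map_zero]
      rcases Nat.eq_zero_or_pos (k / d) with h | h
      · rcases Nat.eq_zero_or_pos (k % d) with h2 | h2
        · exfalso
          have h3 := Nat.div_add_mod k d
          rw [h, Nat.mul_zero] at h3
          omega
        · rw [qb_gt 0 (k%d) h2, map_zero, mul_zero]
      · rw [Nat.choose_eq_zero_of_lt (by omega), Nat.cast_zero, zero_mul]
  | succ n ih =>
    intro k
    rcases Nat.eq_zero_or_pos k with rfl | hk
    · simp [qb_zero]
    obtain ⟨k', rfl⟩ : ∃ k', k = k' + 1 := ⟨k - 1, by omega⟩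
    rw [qb_succ, map_add, map_mul, map_pow, Polynomial.aeval_X, ih (k'+1), ih k']
    have hak : a ^ (k'+1) = a ^ ((k'+1) % d) := by
      conv_lhs => rw [← Nat.div_add_mod (k'+1) d]
      rw [pow_add, pow_mul, had, one_pow, one_mul]
    by_cases hN : (n+1) % d = 0
    · obtain ⟨hn1, hn2⟩ := div_mod_succ_zero d n hd hN
      by_cases hK : (k'+1) % d = 0
      · obtain ⟨hk1, hk2⟩ := div_mod_succ_zero d k' hd hK
        rw [hak, hK, pow_zero, hN, hn1, hk1, hn2, hk2, qb_zero, qb_self, qb_zero,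
          Nat.choose_succ_succ (n/d) (k'/d)]
        push_cast
        ring
      · -- N₀ = 0, K₀ ≥ 1 : both sides 0
        obtain ⟨hk1, hk2⟩ := div_mod_succ_pos d k' hd hK
        have hr := qb_ratio a d hd had hprim ((k'+1)%d) (by omega) (Nat.mod_lt _ hd)
        rw [show (k'+1)%d - 1 = k' % d by omega] at hr
        rw [hak, hN, hn1, hk2, qb_gt 0 ((k'+1)%d) (by omega), map_zero, mul_zero]
        calc ↑((n/d).choose (k'/d)) * Polynomial.aeval a (qBinom (d-1) ((k'+1)%d)) * a^((k'+1)%d)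
              + ↑((n/d).choose (k'/d)) * Polynomial.aeval a (qBinom (d-1) (k'%d))
            = ↑((n/d).choose (k'/d)) * (Polynomial.aeval a (qBinom (d-1) ((k'+1)%d)) * a^((k'+1)%d)
              + Polynomial.aeval a (qBinom (d-1) (k'%d))) := by ring
          _ = 0 := by rw [hr]; ring
    · obtain ⟨hn1, hn2⟩ := div_mod_succ_pos d n hd hN
      have hd2 : 2 ≤ d := by
        by_contra hcon
        push_neg at hcon
        interval_cases d <;> omega
      by_cases hK : (k'+1) % d = 0
      · obtain ⟨hk1, hk2⟩ := div_mod_succ_zero d k' hd hK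
        have hmlt : n % d < d - 1 := by
          have := Nat.mod_lt (n+1) hd
          omega
        rw [hak, hK, pow_zero, hn1, hn2, hk1, hk2, qb_zero, qb_gt (n%d) (d-1) hmlt, qb_zero,
          map_zero, map_one]
        ring
      · obtain ⟨hk1, hk2⟩ := div_mod_succ_pos d k' hd hK
        rw [hak, hn1, hn2, hk1, hk2, qb_succ (n%d) (k'%d), map_add, map_mul, map_pow,
          Polynomial.aeval_X]
        ring

end fieldpart

section glue

variable {p : ℕ} [hpf : Fact p.Prime]

lemma norm_cast_eq (x : ℚ) (hx : x ≠ 0) :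
    ‖(x:ℚ_[p])‖ = (((p:ℚ) ^ (-padicValRat p x) : ℚ) : ℝ) := by
  rw [Padic.eq_padicNorm, padicNorm.eq_zpow_of_nonzero hx]

lemma norm_cast_lt_one_iff (x : ℚ) (hx : x ≠ 0) :
    ‖(x:ℚ_[p])‖ < 1 ↔ 0 < padicValRat p x := by
  rw [norm_cast_eq x hx]
  have hp1 : (1:ℚ) < (p:ℚ) := by exact_mod_cast hpf.out.one_lt
  constructor
  · intro h
    by_contra hv
    push_neg at hv
    have h2 : (1:ℚ) ≤ (p:ℚ) ^ (-padicValRat p x) := one_le_zpow₀ hp1.le (by omega)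
    have h3 : (1:ℝ) ≤ (((p:ℚ) ^ (-padicValRat p x) : ℚ) : ℝ) := by exact_mod_cast h2
    linarith
  · intro h
    have h2 : ((p:ℚ)) ^ (-padicValRat p x) < 1 := zpow_lt_one_of_neg₀ hp1 (by omega)
    exact_mod_cast h2

lemma modeq_iff (x y : ℚ) : RatModEqP p x y ↔ ‖((x:ℚ_[p]) - (y:ℚ_[p]))‖ < 1 := by
  unfold RatModEqP
  by_cases hxy : x = y
  · subst hxy
    simp
  · have hne : x - y ≠ 0 := sub_ne_zero.mpr hxy
    rw [show (x:ℚ_[p]) - (y:ℚ_[p]) = ((x - y : ℚ) : ℚ_[p]) by push_cast; ring,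
      norm_cast_lt_one_iff _ hne]
    exact ⟨fun h => h.resolve_left hxy, fun h => Or.inr h⟩

lemma toZMod_cast (x : ℚ) (h : ‖(x:ℚ_[p])‖ ≤ 1) :
    PadicInt.toZMod (⟨(x:ℚ_[p]), h⟩ : ℤ_[p]) = ratRed p x := by
  have hu : IsUnit ((x.den : ℤ_[p])) := PadicInt.isUnit_den x h
  have hu2 : IsUnit ((x.den : ZMod p)) := by
    have := hu.map PadicInt.toZMod
    rwa [map_natCast] at this
  have hden : ((x.den : ZMod p)) ≠ 0 := by
    intro h0; rw [h0] at hu2; exact not_isUnit_zero hu2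
  have h2 : PadicInt.toZMod (⟨(x:ℚ_[p]), h⟩ : ℤ_[p]) * (x.den : ZMod p) = (x.num : ZMod p) := by
    erw [← map_natCast (PadicInt.toZMod (p := p)), ← map_intCast (PadicInt.toZMod (p := p)),
      ← map_mul (PadicInt.toZMod (p := p))]
    congr 1
    apply Subtype.coe_injective
    show ((x:ℚ_[p]) * (x.den:ℚ_[p])) = ((x.num:ℤ_[p]) : ℚ_[p])
    push_cast
    rw [show ((x:ℚ_[p]) * (x.den:ℚ_[p])) = (((x * (x.den:ℚ) : ℚ)) : ℚ_[p]) by push_cast; ring,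
      Rat.mul_den_eq_num]
    norm_cast
  unfold ratRed
  rw [eq_mul_inv_iff_mul_eq₀ hden]
  exact h2

lemma glue_lemma (x : ℚ) (h : ‖(x:ℚ_[p])‖ ≤ 1) (c : ℤ) (hc : ratRed p x = (c : ZMod p)) :
    RatModEqP p x (c : ℚ) := by
  rw [modeq_iff]
  have key : (⟨(x:ℚ_[p]), h⟩ - (c:ℤ_[p]) : ℤ_[p]) ∈ RingHom.ker
      (PadicInt.toZMod : ℤ_[p] →+* ZMod p) := by
    erw [RingHom.mem_ker, map_sub (PadicInt.toZMod (p := p)), map_intCast, toZMod_cast x h, hc, sub_self]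
  rw [PadicInt.ker_toZMod, PadicInt.maximalIdeal_eq_span_p, Ideal.mem_span_singleton,
    ← PadicInt.norm_lt_one_iff_dvd] at key
  have e : ((⟨(x:ℚ_[p]), h⟩ - (c:ℤ_[p]) : ℤ_[p]) : ℚ_[p]) = (x:ℚ_[p]) - ((c:ℚ):ℚ_[p]) := by
    push_cast
    rfl
  rwa [PadicInt.norm_def, e] at key

lemma ratRed_aeval (q : ℚ) (h : ‖(q:ℚ_[p])‖ ≤ 1) (P : Polynomial ℤ) :
    ‖((Polynomial.aeval q P : ℚ) : ℚ_[p])‖ ≤ 1 ∧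
    ratRed p (Polynomial.aeval q P) = Polynomial.aeval (ratRed p q) P := by
  set z : ℤ_[p] := ⟨(q:ℚ_[p]), h⟩ with hz
  have key : ((Polynomial.aeval q P : ℚ) : ℚ_[p]) = ((Polynomial.aeval z P : ℤ_[p]) : ℚ_[p]) := by
    calc ((Polynomial.aeval q P : ℚ) : ℚ_[p])
        = (Rat.castHom ℚ_[p]).toIntAlgHom (Polynomial.aeval q P) := rfl
      _ = Polynomial.aeval ((Rat.castHom ℚ_[p]).toIntAlgHom q) P :=
          (Polynomial.aeval_algHom_apply _ q P).symm
      _ = Polynomial.aeval ((PadicInt.Coe.ringHom (p := p)).toIntAlgHom z) P := rfl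
      _ = (PadicInt.Coe.ringHom (p := p)).toIntAlgHom (Polynomial.aeval z P) :=
          Polynomial.aeval_algHom_apply _ z P
      _ = ((Polynomial.aeval z P : ℤ_[p]) : ℚ_[p]) := rfl
  have hnorm : ‖((Polynomial.aeval q P : ℚ) : ℚ_[p])‖ ≤ 1 := by
    rw [key, ← PadicInt.norm_def]
    exact PadicInt.norm_le_one _
  refine ⟨hnorm, ?_⟩
  rw [← toZMod_cast _ hnorm]
  have e : (⟨((Polynomial.aeval q P : ℚ) : ℚ_[p]), hnorm⟩ : ℤ_[p]) = Polynomial.aeval z P :=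
    Subtype.coe_injective key
  rw [e, show PadicInt.toZMod (Polynomial.aeval z P)
      = Polynomial.aeval (PadicInt.toZMod z) P from
    (Polynomial.aeval_algHom_apply ((PadicInt.toZMod (p := p)).toIntAlgHom) z P).symm,
    toZMod_cast q h]

end glue

lemma ratRed_eq_of_norm_lt {p : ℕ} [hpf : Fact p.Prime] (x : ℚ) (h : ‖(x:ℚ_[p])‖ ≤ 1) (c : ℤ)
    (hlt : ‖(x:ℚ_[p]) - ((c:ℚ):ℚ_[p])‖ < 1) : ratRed p x = (c : ZMod p) := by
  have e : ((⟨(x:ℚ_[p]), h⟩ - (c:ℤ_[p]) : ℤ_[p]) : ℚ_[p]) = (x:ℚ_[p]) - ((c:ℚ):ℚ_[p]) := by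
    push_cast
    rfl
  have key : ‖(⟨(x:ℚ_[p]), h⟩ - (c:ℤ_[p]) : ℤ_[p])‖ < 1 := by
    rw [PadicInt.norm_def, e]; exact hlt
  erw [PadicInt.norm_lt_one_iff_dvd, ← Ideal.mem_span_singleton,
    ← PadicInt.maximalIdeal_eq_span_p, ← PadicInt.ker_toZMod, RingHom.mem_ker,
    map_sub (PadicInt.toZMod (p := p)), map_intCast] at key
  rw [← toZMod_cast x h]
  exact sub_eq_zero.mp key

/-- Anzawa–Funakura's congruence for `q`-binomial coefficients: if `q` and `q - 1`
are `p`-adic units, or `q ≡ 1 (mod p)`, then `C(p-1,k)_q ≡ C(I_p(q), k/ord_p(q)) (mod p)`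
when `ord_p(q) ∣ k`, and `C(p-1,k)_q ≡ 0 (mod p)` otherwise. -/
theorem statement6 (q : ℚ) (p : ℕ) (hp : p.Prime)
    (hq : ((q ≠ 0 ∧ padicValRat p q = 0) ∧ (q - 1 ≠ 0 ∧ padicValRat p (q - 1) = 0))
      ∨ RatModEqP p q 1) :
    ∀ k : ℕ, k ≤ p - 1 →
      (ordP p q ∣ k →
        RatModEqP p (Polynomial.aeval q (qBinom (p - 1) k))
          ((Nat.choose ((p - 1) / ordP p q) (k / ordP p q) : ℚ))) ∧
      (¬ ordP p q ∣ k → RatModEqP p (Polynomial.aeval q (qBinom (p - 1) k)) 0) := by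
  haveI hpf : Fact p.Prime := ⟨hp⟩
  haveI : Fact (1 < p) := ⟨hp.one_lt⟩
  have hmain : ‖(q:ℚ_[p])‖ ≤ 1 ∧ ratRed p q ≠ 0 := by
    rcases hq with ⟨⟨hq0, hv0⟩, hq1, hv1⟩ | hmod
    · have hqn : ‖(q:ℚ_[p])‖ = 1 := by
        rw [norm_cast_eq q hq0, hv0]
        norm_num
      refine ⟨hqn.le, fun h0 => ?_⟩
      have := (modeq_iff q ((0:ℤ):ℚ)).mp (glue_lemma q hqn.le 0 (by exact_mod_cast h0))
      rw [show (((0:ℤ):ℚ):ℚ_[p]) = 0 by norm_num, sub_zero, hqn] at this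
      linarith
    · have hm1 : ‖(q:ℚ_[p]) - (((1:ℚ)):ℚ_[p])‖ < 1 := (modeq_iff q 1).mp hmod
      have hqle : ‖(q:ℚ_[p])‖ ≤ 1 := by
        have h2 := Padic.nonarchimedean ((q:ℚ_[p]) - ((1:ℚ):ℚ_[p])) ((1:ℚ):ℚ_[p])
        rw [sub_add_cancel] at h2
        refine h2.trans (max_le ?_ ?_)
        · exact hm1.le
        · rw [show (((1:ℚ)):ℚ_[p]) = 1 by norm_num, norm_one]
      have ha1 : ratRed p q = 1 := by
        have := ratRed_eq_of_norm_lt q hqle 1 (by exact_mod_cast hm1)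
        rwa [Int.cast_one] at this
      exact ⟨hqle, by rw [ha1]; exact one_ne_zero⟩
  obtain ⟨hqle, hane⟩ := hmain
  set a := ratRed p q with ha
  have hord : ordP p q = orderOf a := rfl
  have hfin : IsOfFinOrder a := isOfFinOrder_iff_pow_eq_one.mpr
    ⟨p - 1, by have := hp.two_le; omega, ZMod.pow_card_sub_one_eq_one hane⟩
  have hdpos : 0 < orderOf a := orderOf_pos_iff.mpr hfin
  have had : a ^ orderOf a = 1 := pow_orderOf_eq_one a
  have hdvd : orderOf a ∣ p - 1 := orderOf_dvd_of_pow_eq_one (ZMod.pow_card_sub_one_eq_one hane)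
  have hprim : ∀ j, 0 < j → j < orderOf a → a ^ j ≠ 1 := fun j hj hjd hone =>
    absurd (orderOf_le_of_pow_eq_one hj hone) (by omega)
  have hpm : (p - 1) % orderOf a = 0 := by
    obtain ⟨t, ht⟩ := hdvd
    rw [ht, Nat.mul_mod_right]
  intro k _
  have hql := qLucas a (orderOf a) hdpos had hprim (p-1) k
  constructor
  · intro hdk
    rw [hord] at hdk
    have hkm : k % orderOf a = 0 := by
      obtain ⟨t, rfl⟩ := hdk
      exact Nat.mul_mod_right _ _
    rw [hpm, hkm, qb_zero, map_one, mul_one] at hql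
    obtain ⟨hn, hr⟩ := ratRed_aeval q hqle (qBinom (p-1) k)
    have hc : ratRed p (Polynomial.aeval q (qBinom (p-1) k))
        = ((Nat.choose ((p-1)/orderOf a) (k/orderOf a) : ℤ) : ZMod p) := by
      rw [hr, ← ha, hql]
      push_cast
      ring
    have hg := glue_lemma _ hn _ hc
    rw [hord]
    exact_mod_cast hg
  · intro hdk
    rw [hord] at hdk
    have hkm : 0 < k % orderOf a := by
      rcases Nat.eq_zero_or_pos (k % orderOf a) with h0 | h0
      · exact absurd (Nat.dvd_of_mod_eq_zero h0) hdk
      · exact h0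
    rw [hpm, qb_gt 0 (k % orderOf a) hkm, map_zero, mul_zero] at hql
    obtain ⟨hn, hr⟩ := ratRed_aeval q hqle (qBinom (p-1) k)
    have hc : ratRed p (Polynomial.aeval q (qBinom (p-1) k)) = ((0:ℤ) : ZMod p) := by
      rw [hr, ← ha, hql]
      norm_num
    have hg := glue_lemma _ hn _ hc
    exact_mod_cast hg
end

section
/- Let q be a nonzero rational number and p a prime with q a p-adic unit. Then D_{p−1}(q) ≡ 2^{I_p(q)} (mod p), where D_n(q) is the n-th Bressoud polynomial and I_p(q) = (p−1)/ord_p(q) is the index of the subgroup of (ℤ/pℤ)^× generated by q mod p. -/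
open Polynomial

/-- The Bressoud polynomials `D_n(q)`. -/
noncomputable def bressoudD : ℕ → Polynomial ℤ
  | 0 => 1
  | 1 => 1 + X
  | n + 2 => (1 + X - X ^ (n + 2) + X ^ (2 * (n + 2) - 1)) * bressoudD (n + 1)
      - X * (1 - X ^ (n + 1)) * bressoudD n


section BressoudAux

open Finset

variable {R : Type*} [CommRing R]



/-- Gaussian binomial coefficient evaluated at `z`. -/
noncomputable def qb (z : R) : ℕ → ℕ → R
  | 0, 0 => 1
  | 0, _+1 => 0
  | _+1, 0 => 1
  | n+1, k+1 => z ^ (k+1) * qb z n (k+1) + qb z n k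

lemma qb_zero_right (z : R) (n : ℕ) : qb z n 0 = 1 := by cases n <;> rfl

lemma pascalB (z : R) (n k : ℕ) :
    qb z (n+1) (k+1) = z ^ (k+1) * qb z n (k+1) + qb z n k := rfl

lemma qb_of_lt (z : R) : ∀ n k, n < k → qb z n k = 0 := by
  intro n
  induction n with
  | zero => intro k hk
            match k, hk with
            | k+1, _ => rfl
  | succ n ih =>
    intro k hk
    match k, hk with
    | k+1, hk =>
      rw [pascalB, ih (k+1) (by omega), ih k (by omega)]
      ring

lemma qb_self_s8 (z : R) : ∀ n, qb z n n = 1 := by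
  intro n
  induction n with
  | zero => rfl
  | succ n ih =>
    rw [pascalB, qb_of_lt z n (n+1) (by omega), ih]; ring

lemma pascalA (z : R) : ∀ n k, k ≤ n →
    qb z (n+1) (k+1) = qb z n (k+1) + z ^ (n - k) * qb z n k := by
  intro n
  induction n with
  | zero => intro k hk
            interval_cases k
            have h1 := pascalB z 0 0
            have h2 : qb z 0 1 = 0 := rfl
            have h3 : qb z 0 0 = 1 := rfl
            rw [h2, h3] at h1 ⊢
            rw [h1]; norm_num
  | succ n ih =>
    intro k hk
    match k with
    | 0 =>
      have hB1 := pascalB z (n+1) 0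
      have hB0 := pascalB z n 0
      have hA0 := ih 0 (Nat.zero_le n)
      rw [qb_zero_right] at hB1 hB0 hA0
      have e1 : n + 1 - 0 = n + 1 := by omega
      have e2 : n - 0 = n := by omega
      rw [e1, qb_zero_right]; rw [e2] at hA0
      linear_combination hB1 + z * hA0 - hB0
    | j+1 =>
      rcases Nat.lt_or_ge j n with hj | hj
      · obtain ⟨e, rfl⟩ : ∃ e, n = j + 1 + e := ⟨n - (j+1), by omega⟩
        have hB := pascalB z (j+1+e+1) (j+1)
        have hB2 := pascalB z (j+1+e) (j+1)
        have hB1 := pascalB z (j+1+e) j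
        have hA2 := ih (j+1) (by omega)
        have hA1 := ih j (by omega)
        have e1 : j + 1 + e - (j + 1) = e := by omega
        have e2 : j + 1 + e + 1 - (j + 1) = e + 1 := by omega
        have e3 : j + 1 + e - j = e + 1 := by omega
        rw [e1] at hA2
        rw [e3] at hA1
        rw [e2]
        linear_combination hB + z ^ (j+2) * hA2 + hA1 - hB2 - z ^ (e+1) * hB1
      · have hjn : j = n := by omega
        subst hjn
        rw [qb_self_s8 z (j+1+1), qb_of_lt z (j+1) (j+1+1) (by omega), qb_self_s8 z (j+1)]
        simp

noncomputable def Ssum (z : R) (n : ℕ) : R := ∑ k ∈ range (n+1), z ^ (k^2) * qb z n k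
noncomputable def Tsum (z : R) (n : ℕ) : R := ∑ k ∈ range (n+1), z ^ (k^2 + k) * qb z n k
noncomputable def Rsum (z : R) (n : ℕ) : R := ∑ k ∈ range (n+1), z ^ ((k+1)^2) * qb z n k

lemma aux_shift (z : R) (n : ℕ) (e : ℕ → ℕ) (he : e 0 = 0) :
    ∑ k ∈ range (n+1), z ^ (e (k+1)) * qb z n (k+1) + 1
      = ∑ k ∈ range (n+1), z ^ (e k) * qb z n k := by
  rw [Finset.sum_range_succ (fun k => z ^ (e (k+1)) * qb z n (k+1)) n,
    qb_of_lt z n (n+1) (by omega),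
    Finset.sum_range_succ' (fun k => z ^ (e k) * qb z n k) n,
    he, qb_zero_right]
  simp

lemma E1 (z : R) (n : ℕ) : Ssum z (n+1) = Ssum z n + z^(n+1) * Tsum z n := by
  have h : ∀ k ∈ range (n+1), z ^ ((k+1)^2) * qb z (n+1) (k+1)
      = z ^ ((k+1)^2) * qb z n (k+1) + z^(n+1) * (z ^ (k^2+k) * qb z n k) := by
    intro k hk
    rw [mem_range] at hk
    have e : (k+1)^2 + (n - k) = (n+1) + (k^2 + k) := by
      have : (k+1)^2 = k^2+2*k+1 := by ring
      have : k^2 ≤ k^2 := le_refl _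
      omega
    rw [pascalA z n k (by omega), mul_add]
    congr 1
    rw [← mul_assoc, ← pow_add, e, pow_add, mul_assoc]
  show (∑ k ∈ range (n+1+1), z ^ (k^2) * qb z (n+1) k) = _
  rw [Finset.sum_range_succ' (fun k => z ^ (k^2) * qb z (n+1) k) (n+1)]
  rw [Finset.sum_congr rfl h, Finset.sum_add_distrib]
  have h0 : z ^ (0^2) * qb z (n+1) 0 = 1 := by rw [qb_zero_right]; norm_num
  rw [h0, ← Finset.mul_sum]
  have := aux_shift z n (fun k => k^2) (by norm_num)
  show (∑ k ∈ range (n + 1), z ^ ((k+1) ^ 2) * qb z n (k+1))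
      + z ^ (n + 1) * (∑ k ∈ range (n + 1), z ^ (k ^ 2 + k) * qb z n k) + 1
      = Ssum z n + z ^ (n + 1) * Tsum z n
  rw [Ssum, Tsum, ← this]
  ring

lemma E2a (z : R) (n : ℕ) : Ssum z (n+1) = Tsum z n + Rsum z n := by
  have h : ∀ k ∈ range (n+1), z ^ ((k+1)^2) * qb z (n+1) (k+1)
      = z ^ ((k+1)^2 + (k+1)) * qb z n (k+1) + z ^ ((k+1)^2) * qb z n k := by
    intro k _
    rw [pascalB, mul_add]
    congr 1
    rw [← mul_assoc, ← pow_add]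
  show (∑ k ∈ range (n+1+1), z ^ (k^2) * qb z (n+1) k) = _
  rw [Finset.sum_range_succ' (fun k => z ^ (k^2) * qb z (n+1) k) (n+1)]
  rw [Finset.sum_congr rfl h, Finset.sum_add_distrib]
  have h0 : z ^ (0^2) * qb z (n+1) 0 = 1 := by rw [qb_zero_right]; norm_num
  rw [h0]
  have := aux_shift z n (fun k => k^2 + k) (by norm_num)
  show (∑ k ∈ range (n + 1), z ^ ((k+1) ^ 2 + (k+1)) * qb z n (k+1))
      + (∑ k ∈ range (n + 1), z ^ ((k+1) ^ 2) * qb z n k) + 1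
      = Tsum z n + Rsum z n
  rw [Tsum, Rsum, ← this]
  ring

lemma E2b (z : R) (n : ℕ) : Tsum z (n+1) = Tsum z n + z^(n+1) * Rsum z n := by
  have h : ∀ k ∈ range (n+1), z ^ ((k+1)^2 + (k+1)) * qb z (n+1) (k+1)
      = z ^ ((k+1)^2 + (k+1)) * qb z n (k+1) + z^(n+1) * (z ^ ((k+1)^2) * qb z n k) := by
    intro k hk
    rw [mem_range] at hk
    have e : (k+1)^2 + (k+1) + (n - k) = (n+1) + (k+1)^2 := by
      have : (k+1)^2 = k^2+2*k+1 := by ring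
      omega
    rw [pascalA z n k (by omega), mul_add]
    congr 1
    rw [← mul_assoc, ← pow_add, e, pow_add, mul_assoc]
  show (∑ k ∈ range (n+1+1), z ^ (k^2 + k) * qb z (n+1) k) = _
  rw [Finset.sum_range_succ' (fun k => z ^ (k^2 + k) * qb z (n+1) k) (n+1)]
  rw [Finset.sum_congr rfl h, Finset.sum_add_distrib]
  have h0 : z ^ (0^2 + 0) * qb z (n+1) 0 = 1 := by rw [qb_zero_right]; norm_num
  rw [h0, ← Finset.mul_sum]
  have := aux_shift z n (fun k => k^2 + k) (by norm_num)
  show (∑ k ∈ range (n + 1), z ^ ((k+1) ^ 2 + (k+1)) * qb z n (k+1))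
      + z ^ (n + 1) * (∑ k ∈ range (n + 1), z ^ ((k+1) ^ 2) * qb z n k) + 1
      = Tsum z n + z ^ (n + 1) * Rsum z n
  rw [Tsum, Rsum, ← this]
  ring

lemma aeval_bressoudD (z : R) (n : ℕ) : (aeval z) (bressoudD n) = Ssum z n := by
  induction n using Nat.twoStepInduction with
  | zero =>
    show (aeval z) (bressoudD 0) = _
    rw [bressoudD]
    simp [Ssum, qb]
  | one =>
    show (aeval z) (bressoudD 1) = _
    rw [bressoudD]
    simp [Ssum, Finset.sum_range_succ, qb]
  | more n ih1 ih2 =>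
    rw [bressoudD]
    simp only [map_add, map_sub, map_mul, map_pow, map_one, aeval_X, ih1, ih2]
    have hA := E1 z (n+1)
    have hB := E2b z n
    have hC := E2a z n
    have hD := E1 z n
    have e1 : 2 * (n + 2) - 1 = 2*n + 3 := by omega
    rw [e1]
    linear_combination (-(1:R)) * hA - z^(n+2) * hB + z^(2*n+3) * hC
      + (z - z^(n+2)) * hD

lemma choose_two_succ (k : ℕ) : (k+1).choose 2 = k.choose 2 + k := by
  rw [Nat.choose_succ_succ, Nat.choose_one_right, add_comm]

lemma genfun (z : R) (n : ℕ) :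
    ∏ i ∈ range n, (C (z^i) * X + 1)
      = ∑ k ∈ range (n+1), C (z ^ (k.choose 2) * qb z n k) * X ^ k := by
  induction n with
  | zero => simp [qb_zero_right]
  | succ n ih =>
    have sumC_shift : ∀ b : ℕ → R, b 0 = 1 → b (n+1) = 0 →
        (∑ k ∈ range (n+1), C (b (k+1)) * X^(k+1)) + 1
          = ∑ k ∈ range (n+1), C (b k) * X^k := by
      intro b h0 htop
      rw [Finset.sum_range_succ (fun k => C (b (k+1)) * X^(k+1)) n, htop,
        Finset.sum_range_succ' (fun k => C (b k) * X^k) n, h0]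
      simp
    have hterm : ∀ k ∈ range (n+1),
        C (z ^ (k.choose 2) * qb z n k) * X ^ k * (C (z^n) * X)
          = C (z ^ (k.choose 2 + n) * qb z n k) * X ^ (k+1) := by
      intro k _
      rw [pow_add, pow_succ, map_mul, map_mul, map_mul]
      ring
    have hsplit : ∀ k ∈ range (n+1),
        C (z ^ ((k+1).choose 2) * qb z (n+1) (k+1)) * X ^ (k+1)
          = C (z ^ ((k+1).choose 2) * qb z n (k+1)) * X ^ (k+1)
            + C (z ^ (k.choose 2 + n) * qb z n k) * X ^ (k+1) := by
      intro k hk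
      rw [mem_range] at hk
      have e : (k+1).choose 2 + (n - k) = k.choose 2 + n := by
        rw [choose_two_succ]; omega
      rw [pascalA z n k (by omega), mul_add, map_add, add_mul]
      congr 2
      rw [← mul_assoc, ← pow_add, e]
    rw [Finset.prod_range_succ, ih, mul_add, mul_one, Finset.sum_mul,
      Finset.sum_congr rfl hterm,
      Finset.sum_range_succ' (fun k => C (z ^ (k.choose 2) * qb z (n+1) k) * X^k) (n+1),
      Finset.sum_congr rfl hsplit, Finset.sum_add_distrib]
    have h1 := sumC_shift (fun k => z ^ (k.choose 2) * qb z n k)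
      (by simp [qb_zero_right]) (by simp [qb_of_lt z n (n+1) (by omega)])
    have h0 : C (z ^ ((0:ℕ).choose 2) * qb z (n+1) 0) * X^(0:ℕ) = 1 := by
      simp [qb_zero_right]
    rw [h0]
    linear_combination (-(1:Polynomial R)) * h1

variable {K : Type*} [Field K]

lemma two_mul_choose_two : ∀ n : ℕ, 2 * n.choose 2 = n * (n-1) := by
  intro n
  induction n with
  | zero => rfl
  | succ n ih =>
    rw [choose_two_succ, Nat.add_sub_cancel]
    have h : (n+1) * n = n * (n-1) + 2*n := by
      cases n with
      | zero => rfl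
      | succ m => simp only [Nat.add_sub_cancel]; ring
    omega

lemma choose_sq (k : ℕ) : k.choose 2 + (k+1).choose 2 = k^2 := by
  cases k with
  | zero => rfl
  | succ j =>
    rw [choose_two_succ (j+1)]
    have h1 := two_mul_choose_two (j+1)
    rw [Nat.add_sub_cancel] at h1
    have e : 2 * ((j+1)^2) = 2*((j+1)*j) + 2*(j+1) := by ring
    omega

section Zeta
variable (ζ : K) (d : ℕ) (hord : orderOf ζ = d) (hd : 0 < d)
include hord hd

lemma zeta_pow_d : ζ ^ d = 1 := by rw [← hord]; exact pow_orderOf_eq_one ζ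

lemma zeta_half (e : ℕ) (he : d = 2 * e) : ζ ^ e = -1 := by
  have h2 : ζ ^ e * ζ ^ e = 1 := by
    rw [← pow_add]
    have : e + e = d := by omega
    rw [this, zeta_pow_d ζ d hord hd]
  rcases mul_self_eq_one_iff.1 h2 with h | h
  · exfalso
    have hdvd : d ∣ e := by rw [← hord]; exact orderOf_dvd_of_pow_eq_one h
    have he0 : 0 < e := by omega
    have := Nat.le_of_dvd he0 hdvd
    omega
  · exact h

lemma zeta_key (c : ℕ) : (-1 : K) ^ ((d+1)*c) * ζ ^ ((d*c+1).choose 2) = 1 := by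
  have h2N' : 2 * ((d*c+1).choose 2) = (d*c+1) * (d*c) := by
    have h2N := two_mul_choose_two (d*c+1)
    rwa [Nat.add_sub_cancel] at h2N
  rcases Nat.even_or_odd d with ⟨e, he⟩ | hodd
  · -- d even, d = 2e
    have he' : d = 2 * e := by omega
    have hhalf := zeta_half ζ d hord hd e he'
    have hN : (d*c+1).choose 2 = e * (c * (d*c+1)) := by
      have h4 : 2 * ((d*c+1).choose 2) = 2 * (e * (c * (d*c+1))) := by
        rw [h2N', he']; ring
      omega
    rw [hN, pow_mul ζ, hhalf, ← pow_add]
    have heven : Even ((d+1)*c + c*(d*c+1)) := by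
      subst he'
      exact ⟨e*c + e*c^2 + c, by ring⟩
    exact heven.neg_one_pow
  · -- d odd
    have hdvd : d ∣ (d*c+1).choose 2 := by
      have hd2 : d ∣ 2 * ((d*c+1).choose 2) := by
        rw [h2N']; exact ⟨c * (d*c+1), by ring⟩
      have hcop : Nat.Coprime d 2 :=
        Nat.Coprime.symm ((Nat.prime_two.coprime_iff_not_dvd).mpr
          (by obtain ⟨t,ht⟩ := hodd; omega))
      exact hcop.dvd_of_dvd_mul_left hd2
    have h1 : ζ ^ ((d*c+1).choose 2) = 1 := by
      rw [← orderOf_dvd_iff_pow_eq_one, hord]; exact hdvd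
    have h2 : Even ((d+1)*c) := by
      rcases hodd with ⟨t, ht⟩
      exact ⟨(t+1)*c, by subst ht; ring⟩
    rw [h1, h2.neg_one_pow]; ring

lemma zeta_prod_pow : ∏ i ∈ range d, ζ ^ i = (-1 : K) ^ (d+1) := by
  rw [Finset.prod_pow_eq_pow_sum]
  have hsum : (∑ i ∈ range d, i) = d.choose 2 := by
    have h1 := Finset.sum_range_id_mul_two d
    have h3 : (∑ i ∈ range d, i) * 2 = 2 * d.choose 2 := by
      rw [h1, two_mul_choose_two]
    omega
  rw [hsum]
  rcases Nat.even_or_odd d with ⟨e, he⟩ | hodd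
  · have he' : d = 2 * e := by omega
    have hhalf := zeta_half ζ d hord hd e he'
    have hN : d.choose 2 = e * (d-1) := by
      have h4 : 2 * d.choose 2 = 2 * (e * (d-1)) := by
        rw [two_mul_choose_two, he']; ring
      omega
    rw [hN, pow_mul, hhalf]
    have h1 : ¬ Even (d - 1) := by
      simp only [Nat.even_sub (by omega : 1 ≤ d)]
      simp [he', parity_simps]
    have h2 : ¬ Even (d + 1) := by simp [he', parity_simps]
    rw [(Nat.not_even_iff_odd.1 h1).neg_one_pow, (Nat.not_even_iff_odd.1 h2).neg_one_pow]
  · have hdvd : d ∣ d.choose 2 := by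
      have hd2 : d ∣ 2 * d.choose 2 := by
        rw [two_mul_choose_two]; exact ⟨d - 1, rfl⟩
      have hcop : Nat.Coprime d 2 :=
        Nat.Coprime.symm ((Nat.prime_two.coprime_iff_not_dvd).mpr
          (by obtain ⟨t,ht⟩ := hodd; omega))
      exact hcop.dvd_of_dvd_mul_left hd2
    have h1 : ζ ^ (d.choose 2) = 1 := by
      rw [← orderOf_dvd_iff_pow_eq_one, hord]; exact hdvd
    have h2 : Even (d+1) := by
      rcases hodd with ⟨t, ht⟩; exact ⟨t+1, by omega⟩
    rw [h1, h2.neg_one_pow]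
end Zeta

section Zeta2
variable (ζ : K) (d : ℕ) (hord : orderOf ζ = d) (hd : 0 < d)
include hord hd

lemma prod_lin : ∏ i ∈ range d, (C (ζ^i) * X + 1)
    = C ((-1:K)^(d+1)) * X^d + 1 := by
  have hprim : IsPrimitiveRoot ζ d := hord ▸ IsPrimitiveRoot.orderOf ζ
  -- step 1: factor
  have hfac : ∀ i ∈ range d, C (ζ^i) * X + 1 = C (ζ^i) * (X + C (ζ^(d-i))) := by
    intro i hi
    rw [mem_range] at hi
    rw [mul_add, ← map_mul, ← pow_add]
    have e : i + (d - i) = d := by omega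
    rw [e, zeta_pow_d ζ d hord hd, map_one]
  rw [Finset.prod_congr rfl hfac, Finset.prod_mul_distrib, ← map_prod,
    zeta_prod_pow ζ d hord hd]
  -- step 2: the plus-product
  have hQ : ∏ i ∈ range d, (X + C (ζ^i)) = X^d + C ((-1:K)^(d+1)) := by
    have hbase : X ^ d - C (1:K) = ∏ i ∈ range d, (X - C (ζ ^ i * 1)) :=
      X_pow_sub_C_eq_prod hprim hd (one_pow d)
    simp only [mul_one] at hbase
    have happ := congrArg (aeval (-X : K[X])) hbase
    rw [map_sub, map_pow, aeval_X, aeval_C, map_one, map_prod] at happ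
    have hterm : ∀ i ∈ range d, (aeval (-X : K[X])) (X - C (ζ^i))
        = (-1) * (X + C (ζ^i)) := by
      intro i _
      rw [map_sub, aeval_X, aeval_C, Polynomial.algebraMap_eq]
      ring
    rw [Finset.prod_congr rfl hterm, Finset.prod_mul_distrib, Finset.prod_const,
      Finset.card_range] at happ
    -- happ : (-X)^d - C 1 = (-1)^d * ∏ (X + C (ζ^i))
    have h1 : ((-1:K[X])^d) * ((-X)^d - 1) = ∏ i ∈ range d, (X + C (ζ^i)) := by
      rw [happ, ← mul_assoc, ← mul_pow]
      simp
    have hC : C ((-1:K)^(d+1)) = (-1:K[X])^(d+1) := by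
      rw [map_pow, map_neg, map_one]
    rw [hC, ← h1, neg_pow (X : K[X]) d]
    have h3 : (-1:K[X])^(d+d) = 1 := Even.neg_one_pow ⟨d, rfl⟩
    linear_combination (X^d : K[X]) * h3
  -- step 3: reindex  ∏ (X + C(ζ^(d-i))) = ∏ (X + C(ζ^i))
  have hre : ∏ i ∈ range d, (X + C (ζ^(d-i))) = ∏ i ∈ range d, (X + C (ζ^i)) := by
    have h1 : ∀ i ∈ range d, X + C (ζ^(d-i)) = (fun j => X + C (ζ^(j+1))) (d-1-i) := by
      intro i hi
      rw [mem_range] at hi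
      have : d - 1 - i + 1 = d - i := by omega
      simp only [this]
    rw [Finset.prod_congr rfl h1, Finset.prod_range_reflect (fun j => X + C (ζ^(j+1))) d]
    -- now : ∏ j ∈ range d, (X + C (ζ^(j+1))) = ∏ i ∈ range d, (X + C (ζ^i))
    have hg0 : (X + C ((ζ:K)^(0:ℕ)) : K[X]) ≠ 0 := by
      intro h
      have := congrArg natDegree h
      rw [natDegree_X_add_C, natDegree_zero] at this
      omega
    apply mul_right_cancel₀ hg0
    rw [← Finset.prod_range_succ' (fun j => X + C (ζ^j)) d,
      Finset.prod_range_succ (fun j => X + C (ζ^j)) d,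
      zeta_pow_d ζ d hord hd, pow_zero]
  rw [hre, hQ]
  rw [mul_add, ← map_mul, ← pow_add]
  have h2 : (-1:K)^((d+1)+(d+1)) = 1 := by
    have e : (d+1)+(d+1) = 2*(d+1) := by omega
    rw [e, pow_mul]; norm_num
  rw [h2, map_one]

lemma prod_md (m : ℕ) : ∏ i ∈ range (m*d), (C (ζ^i) * X + 1)
    = (C ((-1:K)^(d+1)) * X^d + 1)^m := by
  induction m with
  | zero => simp
  | succ m ih =>
    have e : (m+1)*d = m*d + d := by ring
    rw [e, Finset.prod_range_add]
    have hterm : ∀ i ∈ range d, C (ζ^(m*d + i)) * X + 1 = C (ζ^i) * X + 1 := by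
      intro i _
      rw [pow_add, mul_comm m d, pow_mul, zeta_pow_d ζ d hord hd, one_pow, one_mul]
    rw [Finset.prod_congr rfl hterm, ih, prod_lin ζ d hord hd]
    ring

end Zeta2

lemma qbExpandPow (ε : K) (d m : ℕ) : (C ε * X^d + 1 : K[X])^m
    = ∑ c ∈ range (m+1), C ((m.choose c : K) * ε^c) * X^(d*c) := by
  rw [add_pow]
  apply Finset.sum_congr rfl
  intro c _
  rw [one_pow, mul_one, mul_pow, ← map_pow, ← pow_mul, map_mul, Polynomial.C_eq_natCast]
  ring

section Zeta3
variable (ζ : K) (d : ℕ) (hord : orderOf ζ = d) (hd : 0 < d)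
include hord hd

lemma Ssum_eq (m : ℕ) : Ssum ζ (m*d) = (2^m : K) := by
  set ε := (-1:K)^(d+1) with hε
  have hP : (∑ k ∈ range (m*d+1), C (ζ ^ (k.choose 2) * qb ζ (m*d) k) * X ^ k)
      = ∑ c ∈ range (m+1), C ((m.choose c : K) * ε^c) * X^(d*c) := by
    rw [← genfun, prod_md ζ d hord hd, qbExpandPow]
  have hcoeff : ∀ k, k < m*d+1 → ζ ^ (k.choose 2) * qb ζ (m*d) k
      = ∑ c ∈ range (m+1), ((m.choose c : K) * ε^c) * (if k = d*c then 1 else 0) := by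
    intro k hk
    have h := congrArg (fun f => Polynomial.coeff f k) hP
    simp only [Polynomial.finset_sum_coeff, Polynomial.coeff_C_mul,
      Polynomial.coeff_X_pow, mul_ite, mul_one, mul_zero] at h
    rw [Finset.sum_ite_eq (range (m*d+1)) k
      (fun j => ζ ^ (j.choose 2) * qb ζ (m*d) j), if_pos (mem_range.mpr hk)] at h
    rw [h]
    apply Finset.sum_congr rfl
    intro c _
    split <;> ring
  rw [Ssum]
  have step1 : ∀ k ∈ range (m*d+1), ζ^(k^2) * qb ζ (m*d) k
      = ζ^((k+1).choose 2) * (ζ^(k.choose 2) * qb ζ (m*d) k) := by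
    intro k _
    rw [← mul_assoc, ← pow_add, add_comm ((k+1).choose 2) (k.choose 2), choose_sq]
  rw [Finset.sum_congr rfl step1]
  have step2 : ∀ k ∈ range (m*d+1), ζ^((k+1).choose 2) * (ζ^(k.choose 2) * qb ζ (m*d) k)
      = ∑ c ∈ range (m+1),
          ζ^((k+1).choose 2) * (((m.choose c : K) * ε^c) * (if k = d*c then 1 else 0)) := by
    intro k hk
    rw [mem_range] at hk
    rw [hcoeff k hk, Finset.mul_sum]
  rw [Finset.sum_congr rfl step2, Finset.sum_comm]
  have step3 : ∀ c ∈ range (m+1),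
      (∑ k ∈ range (m*d+1),
        ζ^((k+1).choose 2) * (((m.choose c : K) * ε^c) * (if k = d*c then 1 else 0)))
        = (m.choose c : K) := by
    intro c hc
    rw [mem_range] at hc
    have hmem : d*c ∈ range (m*d+1) := by
      rw [mem_range]
      have h1 : d*c ≤ m*d := by
        rw [mul_comm d c]
        exact Nat.mul_le_mul_right d (by omega)
      omega
    simp only [mul_ite, mul_one, mul_zero]
    rw [Finset.sum_ite_eq' (range (m*d+1)) (d*c)
      (fun k => ζ^((k+1).choose 2) * ((m.choose c : K) * ε^c)), if_pos hmem]
    have hkey := zeta_key ζ d hord hd c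
    rw [pow_mul] at hkey
    rw [hε]
    linear_combination (m.choose c : K) * hkey
  rw [Finset.sum_congr rfl step3, ← Nat.cast_sum, Nat.sum_range_choose]
  push_cast
  ring

end Zeta3

end BressoudAux

/-- For a nonzero rational `q` that is a `p`-adic unit,
`D_{p-1}(q) ≡ 2^{I_p(q)} (mod p)` where `I_p(q) = (p-1)/ord_p(q)`. -/
theorem statement8 (q : ℚ) (hq0 : q ≠ 0) (p : ℕ) (hp : p.Prime)
    (hval : padicValRat p q = 0) :
    RatModEqP p (Polynomial.aeval q (bressoudD (p - 1)))
      ((2 : ℚ) ^ ((p - 1) / ordP p q)) := by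
  haveI : Fact p.Prime := ⟨hp⟩
  have hnorm : ‖(q : ℚ_[p])‖ = 1 := by
    rw [Padic.eq_padicNorm, padicNorm.eq_zpow_of_nonzero hq0, hval]
    norm_num
  set Q : ℤ_[p] := ⟨(q : ℚ_[p]), le_of_eq hnorm⟩ with hQdef
  set ζ : ZMod p := PadicInt.toZMod Q with hζdef
  have hQnorm : ‖Q‖ = 1 := hnorm
  have hζne : ζ ≠ 0 := by
    intro h0
    have hker : Q ∈ RingHom.ker (PadicInt.toZMod : ℤ_[p] →+* ZMod p) :=
      RingHom.mem_ker.mpr h0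
    rw [PadicInt.ker_toZMod, PadicInt.maximalIdeal_eq_span_p,
      Ideal.mem_span_singleton, ← PadicInt.norm_lt_one_iff_dvd] at hker
    rw [hQnorm] at hker
    norm_num at hker
  have hmulQ : Q * (q.den : ℤ_[p]) = (q.num : ℤ_[p]) := by
    apply Subtype.ext
    push_cast
    show (q : ℚ_[p]) * (q.den : ℚ_[p]) = (q.num : ℚ_[p])
    have hrat : (q : ℚ) * (q.den : ℚ) = (q.num : ℚ) := by
      rw [Rat.mul_den_eq_num]
    calc (q : ℚ_[p]) * (q.den : ℚ_[p]) = (((q * (q.den : ℚ) : ℚ)) : ℚ_[p]) := by push_cast; ring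
    _ = (q.num : ℚ_[p]) := by rw [hrat]; push_cast; ring
  have hmulζ : ζ * (q.den : ZMod p) = (q.num : ZMod p) := by
    have h := congrArg (PadicInt.toZMod : ℤ_[p] →+* ZMod p) hmulQ
    rwa [map_mul, map_natCast, map_intCast] at h
  have hden0 : ((q.den : ZMod p)) ≠ 0 := by
    intro h0
    rw [h0, mul_zero] at hmulζ
    have hn : (p:ℤ) ∣ q.num := (ZMod.intCast_zmod_eq_zero_iff_dvd _ _).1 hmulζ.symm
    have hdd : p ∣ q.den := (ZMod.natCast_eq_zero_iff _ _).1 h0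
    have hgcd : p ∣ Nat.gcd q.num.natAbs q.den :=
      Nat.dvd_gcd (Int.natAbs_dvd_natAbs.mpr (by exact_mod_cast hn) : p ∣ q.num.natAbs) hdd
    rw [q.reduced] at hgcd
    have h1 := Nat.dvd_one.mp hgcd
    have := hp.two_le
    omega
  have hζval : ζ = ratRed p q := by
    rw [ratRed, ← hmulζ, mul_assoc, mul_inv_cancel₀ hden0, mul_one]
  have hζ1 : ζ ^ (p-1) = 1 := ZMod.pow_card_sub_one_eq_one hζne
  set d := orderOf ζ with hdd
  have hddvd : d ∣ p - 1 := orderOf_dvd_of_pow_eq_one hζ1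
  have hppos : 0 < p - 1 := by have := hp.two_le; omega
  have hdpos : 0 < d := by
    rcases Nat.eq_zero_or_pos d with h | h
    · rw [h] at hddvd; have := Nat.zero_dvd.mp hddvd; omega
    · exact h
  set m := (p-1)/d with hm
  have hmd : m * d = p - 1 := Nat.div_mul_cancel hddvd
  have heval : (aeval ζ) (bressoudD (p-1)) = (2:ZMod p)^m := by
    rw [aeval_bressoudD, ← hmd, Ssum_eq ζ d hdd.symm hdpos]
  have hord' : ordP p q = d := by rw [ordP, ← hζval]
  set A : ℤ_[p] := (aeval Q) (bressoudD (p-1)) - ((2^m : ℕ) : ℤ_[p]) with hA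
  have htoA : PadicInt.toZMod A = 0 := by
    rw [hA, map_sub, map_natCast]
    have hcomm : PadicInt.toZMod ((aeval Q) (bressoudD (p-1)))
        = (aeval ζ) (bressoudD (p-1)) := by
      exact (aeval_algHom_apply ((PadicInt.toZMod : ℤ_[p] →+* ZMod p).toIntAlgHom) Q
        (bressoudD (p-1))).symm
    rw [hcomm, heval]
    push_cast
    ring
  have hnormA : ‖A‖ < 1 := by
    have hker : A ∈ RingHom.ker (PadicInt.toZMod : ℤ_[p] →+* ZMod p) :=
      RingHom.mem_ker.mpr htoA
    rw [PadicInt.ker_toZMod, PadicInt.maximalIdeal_eq_span_p,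
      Ideal.mem_span_singleton] at hker
    rwa [PadicInt.norm_lt_one_iff_dvd]
  set r : ℚ := (aeval q) (bressoudD (p-1)) - 2^((p-1)/ordP p q) with hr
  have hrm : (p-1)/ordP p q = m := by rw [hord']
  have hcast : ((r : ℚ) : ℚ_[p]) = (A : ℚ_[p]) := by
    rw [hr, hA, hrm]
    push_cast
    congr 1
    have h1 : ((aeval q (bressoudD (p-1)) : ℚ) : ℚ_[p])
        = aeval ((q:ℚ) : ℚ_[p]) (bressoudD (p-1)) := by
      exact (aeval_algHom_apply ((Rat.castHom ℚ_[p]).toIntAlgHom) q (bressoudD (p-1))).symm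
    have h2 : (((aeval Q (bressoudD (p-1)) : ℤ_[p])) : ℚ_[p])
        = aeval ((Q : ℤ_[p]) : ℚ_[p]) (bressoudD (p-1)) := by
      exact (aeval_algHom_apply ((PadicInt.Coe.ringHom : ℤ_[p] →+* ℚ_[p]).toIntAlgHom) Q
        (bressoudD (p-1))).symm
    rw [h1, h2]
  rcases eq_or_ne r 0 with h0 | h0
  · left
    have := sub_eq_zero.mp (hr ▸ h0)
    exact this
  · right
    show 0 < padicValRat p r
    have hnr : ‖(r:ℚ_[p])‖ < 1 := by rw [hcast, ← PadicInt.norm_def]; exact hnormA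
    rw [Padic.eq_padicNorm] at hnr
    have hq1 : padicNorm p r < 1 := by exact_mod_cast hnr
    rw [padicNorm.eq_zpow_of_nonzero h0] at hq1
    by_contra hv
    push_neg at hv
    have hple : (1:ℚ) ≤ (p:ℚ) := by exact_mod_cast hp.one_lt.le
    have : (1:ℚ) ≤ (p:ℚ) ^ (-padicValRat p r) :=
      one_le_zpow₀ hple (by omega)
    linarith
end

section
/- The elements (⌊log p⌋ mod p)_p and (⌊log log p⌋ mod p)_p of A are algebraically independent over ℚ: for every nonzero polynomial F(x,y) with integer coefficients, there exist infinitely many primes p such that p ∤ F(⌊log p⌋, ⌊log log p⌋). -/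
open Filter Polynomial

-- Lemma A: nonvanishing of an integer polynomial beyond its coefficient sum
lemma auxA_s11 (q : Polynomial ℤ) (hq : q ≠ 0) (a : ℤ)
    (ha : (∑ i ∈ Finset.range (q.natDegree + 1), |q.coeff i|) < a) : q.eval a ≠ 0 := by
  set n := q.natDegree with hn
  set S := ∑ i ∈ Finset.range (n + 1), |q.coeff i| with hSdef
  have hlead : q.coeff n ≠ 0 := by
    simpa [hn] using Polynomial.leadingCoeff_ne_zero.mpr hq
  have hlead1 : 1 ≤ |q.coeff n| := Int.one_le_abs (by simpa using hlead)
  have hS : |q.coeff n| ≤ S :=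
    Finset.single_le_sum (f := fun i => |q.coeff i|) (fun i _ => abs_nonneg _)
      (Finset.self_mem_range_succ n)
  have ha1 : 1 ≤ a := le_trans (le_trans hlead1 hS) ha.le
  have heval : q.eval a = ∑ i ∈ Finset.range (n + 1), q.coeff i * a ^ i := by
    rw [Polynomial.eval_eq_sum_range]
  rcases Nat.eq_zero_or_pos n with h0 | hpos
  · rw [heval, h0]; simpa using hlead ∘ (by simpa [h0] using ·)
  · have hsplit : q.eval a = (∑ i ∈ Finset.range n, q.coeff i * a ^ i) + q.coeff n * a ^ n := by
      rw [heval, Finset.sum_range_succ]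
    set T := ∑ i ∈ Finset.range n, q.coeff i * a ^ i with hT
    have hS' : (∑ i ∈ Finset.range n, |q.coeff i|) + |q.coeff n| = S := by
      rw [hSdef, Finset.sum_range_succ]
    have hTb : |T| ≤ (S - 1) * a ^ (n - 1) := by
      calc |T| ≤ ∑ i ∈ Finset.range n, |q.coeff i * a ^ i| := Finset.abs_sum_le_sum_abs _ _
        _ ≤ ∑ i ∈ Finset.range n, |q.coeff i| * a ^ (n - 1) := by
            refine Finset.sum_le_sum fun i hi => ?_
            rw [abs_mul, abs_pow, abs_of_nonneg (by linarith : (0:ℤ) ≤ a)]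
            refine mul_le_mul_of_nonneg_left ?_ (abs_nonneg _)
            exact pow_le_pow_right₀ ha1 (Nat.le_sub_one_of_lt (Finset.mem_range.mp hi))
        _ = (∑ i ∈ Finset.range n, |q.coeff i|) * a ^ (n - 1) := by rw [Finset.sum_mul]
        _ ≤ (S - 1) * a ^ (n - 1) := by
            refine mul_le_mul_of_nonneg_right ?_ (by positivity)
            omega
    have hpow : (0:ℤ) < a ^ (n - 1) := by positivity
    have hTlt : |T| < a ^ n := by
      calc |T| ≤ (S - 1) * a ^ (n - 1) := hTb
        _ < a * a ^ (n - 1) := by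
            exact mul_lt_mul_of_pos_right (by omega) hpow
        _ = a ^ n := by
            rw [← pow_succ']; congr 1; omega
    have hhead : a ^ n ≤ |q.coeff n * a ^ n| := by
      rw [abs_mul, abs_pow, abs_of_nonneg (by linarith : (0:ℤ) ≤ a)]
      nlinarith [pow_pos (show (0:ℤ) < a by linarith) n]
    intro h0
    rw [hsplit] at h0
    have : q.coeff n * a ^ n = -T := by linarith
    rw [← abs_neg, ← this] at hTlt
    exact absurd (lt_of_le_of_lt hhead hTlt) (lt_irrefl _)

open MvPolynomial in
-- Lemma C: size bound on evaluation of a multivariate integer polynomial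
lemma auxC_s11 {k : ℕ} (h : MvPolynomial (Fin k) ℤ) (v : Fin k → ℤ) (a : ℤ) (ha : 1 ≤ a)
    (hv : ∀ i, 0 ≤ v i ∧ v i ≤ a) :
    |MvPolynomial.eval v h| ≤ (∑ m ∈ h.support, |MvPolynomial.coeff m h|) * a ^ h.totalDegree := by
  rw [MvPolynomial.eval_eq']
  calc |∑ m ∈ h.support, coeff m h * ∏ i, v i ^ m i|
      ≤ ∑ m ∈ h.support, |coeff m h * ∏ i, v i ^ m i| := Finset.abs_sum_le_sum_abs _ _
    _ ≤ ∑ m ∈ h.support, |coeff m h| * a ^ h.totalDegree := by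
        refine Finset.sum_le_sum fun m hm => ?_
        rw [abs_mul]
        refine mul_le_mul_of_nonneg_left ?_ (abs_nonneg _)
        have h1 : |∏ i, v i ^ m i| ≤ ∏ i : Fin k, a ^ m i := by
          rw [Finset.abs_prod]
          refine Finset.prod_le_prod (fun i _ => abs_nonneg _) fun i _ => ?_
          rw [abs_pow, abs_of_nonneg (hv i).1]
          exact pow_le_pow_left₀ (hv i).1 (hv i).2 _
        refine h1.trans ?_
        rw [Finset.prod_pow_eq_pow_sum]
        refine pow_le_pow_right₀ ha ?_
        have : ∑ i : Fin k, m i = m.sum fun _ e => e :=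
          (Finsupp.sum_fintype (f := m) (fun _ e => e) (fun _ => rfl)).symm
        rw [this]
        exact MvPolynomial.le_totalDegree hm
    _ = (∑ m ∈ h.support, |coeff m h|) * a ^ h.totalDegree := by rw [Finset.sum_mul]

-- Lemma G: exponential growth beats polynomials
lemma auxG (c : ℝ) (e : ℕ) : ∀ᶠ x : ℝ in atTop, c * x ^ e + 2 ≤ Real.exp x := by
  have h1 := (Real.tendsto_exp_div_pow_atTop e).eventually_ge_atTop (|c| + 2)
  filter_upwards [h1, eventually_ge_atTop (1:ℝ)] with x hx hx1
  have hxe : (1:ℝ) ≤ x ^ e := one_le_pow₀ hx1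
  have h2 : (|c| + 2) * x ^ e ≤ Real.exp x := by
    rw [le_div_iff₀ (by positivity)] at hx; linarith
  nlinarith [le_abs_self c, abs_nonneg c]

open MvPolynomial in
-- Lemma E: a nonzero univariate polynomial doesn't vanish at large arguments
lemma auxE (g : MvPolynomial (Fin 1) ℤ) (hg : g ≠ 0) :
    ∃ B : ℤ, ∀ b : ℤ, B ≤ b → MvPolynomial.eval ![b] g ≠ 0 := by
  set φ : MvPolynomial (Fin 0) ℤ →+* ℤ := MvPolynomial.eval (fun _ => 0) with hφ
  have hφinj : Function.Injective φ := by
    intro x y hxy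
    obtain ⟨r, rfl⟩ := MvPolynomial.C_surjective (Fin 0) x
    obtain ⟨s, rfl⟩ := MvPolynomial.C_surjective (Fin 0) y
    simpa [hφ] using hxy
  have hP0 : MvPolynomial.finSuccEquiv ℤ 0 g ≠ 0 := by
    intro h
    exact hg ((map_eq_zero_iff _ (AlgEquiv.injective _)).mp h)
  set g2 : Polynomial ℤ := (MvPolynomial.finSuccEquiv ℤ 0 g).map φ with hg2
  have hg2ne : g2 ≠ 0 := by
    rw [hg2, Ne, Polynomial.map_eq_zero_iff hφinj]
    exact hP0
  refine ⟨(∑ i ∈ Finset.range (g2.natDegree + 1), |g2.coeff i|) + 1, fun b hb => ?_⟩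
  have hkey : MvPolynomial.eval ![b] g = g2.eval b := by
    have hv : ![b] = Fin.cons b (fun _ : Fin 0 => (0:ℤ)) := by
      funext i; fin_cases i; rfl
    rw [hv, MvPolynomial.eval_eq_eval_mv_eval']
  rw [hkey]
  exact auxA_s11 g2 hg2ne b (by omega)

open MvPolynomial in
-- Lemma D: main nonvanishing criterion
lemma auxD (F : MvPolynomial (Fin 2) ℤ) (hF : F ≠ 0) :
    ∃ (B K : ℤ) (E : ℕ), 0 ≤ K ∧ ∀ a b : ℤ, 1 ≤ b → B ≤ b → K * b ^ E < a →
      MvPolynomial.eval ![a, b] F ≠ 0 := by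
  set P := MvPolynomial.finSuccEquiv ℤ 1 F with hPdef
  have hP : P ≠ 0 := fun h => hF ((map_eq_zero_iff _ (AlgEquiv.injective _)).mp h)
  set n := P.natDegree with hn
  have hlead : P.coeff n ≠ 0 := by
    simpa [hn] using Polynomial.leadingCoeff_ne_zero.mpr hP
  obtain ⟨B, hB⟩ := auxE (P.coeff n) hlead
  set S : ℕ → ℤ := fun i => ∑ m ∈ (P.coeff i).support, |MvPolynomial.coeff m (P.coeff i)| with hSdef
  set K : ℤ := ∑ i ∈ Finset.range (n + 1), S i with hK
  set E : ℕ := Finset.sup (Finset.range (n + 1)) (fun i => (P.coeff i).totalDegree) with hE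
  have hSnn : ∀ i, 0 ≤ S i := fun i => Finset.sum_nonneg fun _ _ => abs_nonneg _
  have hKnn : 0 ≤ K := Finset.sum_nonneg fun i _ => hSnn i
  refine ⟨B, K, E, hKnn, fun a b hb1 hbB ha => ?_⟩
  have ha1 : 1 ≤ a := by nlinarith [pow_pos (show (0:ℤ) < b by omega) E]
  set q : Polynomial ℤ := P.map (MvPolynomial.eval ![b]) with hq
  have hkey : MvPolynomial.eval ![a, b] F = q.eval a := by
    have hv : ![a, b] = Fin.cons a ![b] := by
      funext i; fin_cases i <;> rfl
    rw [hv, MvPolynomial.eval_eq_eval_mv_eval']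
  have hqcoeff : ∀ i, q.coeff i = MvPolynomial.eval ![b] (P.coeff i) := fun i =>
    Polynomial.coeff_map _ i
  have hqne : q ≠ 0 := fun h => hB b hbB (by rw [← hqcoeff n, h, Polynomial.coeff_zero])
  rw [hkey]
  refine auxA_s11 q hqne a ?_
  have hdeg : q.natDegree ≤ n := Polynomial.natDegree_map_le
  calc (∑ i ∈ Finset.range (q.natDegree + 1), |q.coeff i|)
      ≤ ∑ i ∈ Finset.range (n + 1), |q.coeff i| := by
        refine Finset.sum_le_sum_of_subset_of_nonneg ?_ (fun _ _ _ => abs_nonneg _)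
        exact Finset.range_subset_range.mpr (by omega)
    _ ≤ ∑ i ∈ Finset.range (n + 1), S i * b ^ E := by
        refine Finset.sum_le_sum fun i hi => ?_
        rw [hqcoeff i]
        refine le_trans (auxC_s11 (P.coeff i) ![b] b hb1 ?_) ?_
        · intro j; fin_cases j; exact ⟨by simp; omega, by simp⟩
        · refine mul_le_mul_of_nonneg_left ?_ (hSnn i)
          exact pow_le_pow_right₀ hb1 (Finset.le_sup (f := fun i => (P.coeff i).totalDegree) hi)
    _ = K * b ^ E := by rw [hK, Finset.sum_mul]
    _ < a := ha

/-- `(⌊log p⌋ mod p)_p` and `(⌊log log p⌋ mod p)_p` are algebraically independent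
over `ℚ`: for every nonzero `F ∈ ℤ[x,y]` there are infinitely many primes `p`
with `p ∤ F(⌊log p⌋, ⌊log log p⌋)`. -/
theorem statement11 (F : MvPolynomial (Fin 2) ℤ) (hF : F ≠ 0) :
    {p : ℕ | p.Prime ∧
      ¬ (p : ℤ) ∣ MvPolynomial.eval ![⌊Real.log p⌋, ⌊Real.log (Real.log p)⌋] F}.Infinite := by
  obtain ⟨B, K, E, hKnn, hD⟩ := auxD F hF
  set C : ℤ := ∑ m ∈ F.support, |MvPolynomial.coeff m F| with hC
  set D := F.totalDegree with hDdef
  have hlog : Tendsto (fun p : ℕ => Real.log p) atTop atTop :=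
    Real.tendsto_log_atTop.comp tendsto_natCast_atTop_atTop
  have hloglog : Tendsto (fun p : ℕ => Real.log (Real.log p)) atTop atTop :=
    Real.tendsto_log_atTop.comp hlog
  have ha_top : Tendsto (fun p : ℕ => (⌊Real.log p⌋ : ℝ)) atTop atTop :=
    tendsto_intCast_atTop_atTop.comp (tendsto_floor_atTop.comp hlog)
  have hb_top : Tendsto (fun p : ℕ => (⌊Real.log (Real.log p)⌋ : ℝ)) atTop atTop :=
    tendsto_intCast_atTop_atTop.comp (tendsto_floor_atTop.comp hloglog)
  have hbZ_top : Tendsto (fun p : ℕ => ⌊Real.log (Real.log p)⌋) atTop atTop :=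
    tendsto_floor_atTop.comp hloglog
  have hev : ∀ᶠ p : ℕ in atTop, p.Prime →
      ¬ (p : ℤ) ∣ MvPolynomial.eval ![⌊Real.log p⌋, ⌊Real.log (Real.log p)⌋] F := by
    filter_upwards [hbZ_top.eventually_ge_atTop 1, hbZ_top.eventually_ge_atTop B,
      hlog.eventually_gt_atTop 0, hb_top.eventually (auxG (K : ℝ) E),
      ha_top.eventually (auxG (C : ℝ) D), eventually_ge_atTop 1] with p hb1 hbB hL hKexp hCexp hp1 _
    set L := Real.log p with hLdef
    set a : ℤ := ⌊L⌋ with ha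
    set b : ℤ := ⌊Real.log L⌋ with hb
    have hba : b ≤ a := Int.floor_le_floor (Real.log_le_self hL.le)
    have ha1 : 1 ≤ a := le_trans hb1 hba
    -- a > K * b ^ E
    have hexpb : Real.exp b < (a : ℝ) + 1 := by
      have h1 : (b : ℝ) ≤ Real.log L := Int.floor_le _
      have h2 : L < (a : ℝ) + 1 := Int.lt_floor_add_one _
      have h3 : (b : ℝ) < Real.log ((a : ℝ) + 1) :=
        lt_of_le_of_lt h1 (Real.log_lt_log hL h2)
      calc Real.exp b < Real.exp (Real.log ((a : ℝ) + 1)) := Real.exp_lt_exp.mpr h3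
        _ = (a : ℝ) + 1 := Real.exp_log (by positivity)
    have hKba : K * b ^ E < a := by
      have : ((K * b ^ E : ℤ) : ℝ) < (a : ℤ) := by push_cast; nlinarith
      exact_mod_cast this
    have hne : MvPolynomial.eval ![a, b] F ≠ 0 := hD a b hb1 hbB hKba
    -- |eval| < p
    have hpexp : Real.exp a ≤ (p : ℝ) := by
      have h1 : (a : ℝ) ≤ L := Int.floor_le _
      calc Real.exp a ≤ Real.exp L := Real.exp_le_exp.mpr h1
        _ = (p : ℝ) := Real.exp_log (by exact_mod_cast hp1)
    have hCap : C * a ^ D < (p : ℤ) := by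
      have : ((C * a ^ D : ℤ) : ℝ) < ((p : ℤ) : ℝ) := by push_cast; nlinarith
      exact_mod_cast this
    have habs : |MvPolynomial.eval ![a, b] F| ≤ C * a ^ D := by
      refine auxC_s11 F ![a, b] a ha1 ?_
      intro j; fin_cases j <;> constructor <;> simp <;> omega
    intro hdvd
    exact hne (Int.eq_zero_of_abs_lt_dvd hdvd (lt_of_le_of_lt habs hCap))
  rw [eventually_atTop] at hev
  obtain ⟨N, hN⟩ := hev
  refine Set.Infinite.mono ?_ (Nat.infinite_setOf_prime.diff (Set.finite_Iio N))
  rintro p ⟨hp, hpN⟩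
  simp only [Set.mem_Iio, not_lt] at hpN
  exact ⟨hp, hN p hpN hp⟩
end

section
/- Let α = u/v > 1 with u, v coprime positive integers, and let p be a prime dividing Φ_ℓ(u,v) = (u^ℓ − v^ℓ)/(u−v) for a prime ℓ with ℓ < p. Write Φ_ℓ(u,v) = p·t_p. Then the Fermat quotients satisfy ℓ·q_p(α) ≡ −v^{−ℓ}(u − v)·t_p (mod p), where q_p(x) = (x^{p−1} − 1)/p. -/
/-- The Fermat quotient `q_p(α) = (α^{p-1} - 1)/p` as a rational number. -/
def fermatQuot (p : ℕ) (α : ℚ) : ℚ := (α ^ (p - 1) - 1) / p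

/-- Binomial expansion for a square-zero element. -/
lemma sq_zero_add_pow {R : Type*} [CommRing R] (a x : R) (hx : x * x = 0) (n : ℕ) :
    (a + x) ^ (n + 1) = a ^ (n + 1) + (n + 1 : ℕ) * a ^ n * x := by
  induction n with
  | zero => push_cast; ring
  | succ n ih =>
    have key : (a ^ (n + 1) + ((n : R) + 1) * a ^ n * x) * (a + x)
        = a ^ (n + 2) + ((n : R) + 2) * a ^ (n + 1) * x + ((n : R) + 1) * a ^ n * (x * x) := by
      ring
    rw [pow_succ, ih]
    push_cast
    rw [key, hx]
    ring

/-- Let `α = u/v > 1` with `u, v` coprime, `ℓ < p` primes, and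
`Φ_ℓ(u,v) = p·t`. Then `ℓ·q_p(α) ≡ -v^{-ℓ}(u - v)·t (mod p)`. -/
theorem statement15 (u v : ℤ) (hv : 0 < v) (hvu : v < u) (hcop : IsCoprime u v)
    (ℓ p : ℕ) (hℓ : ℓ.Prime) (hp : p.Prime) (hlp : ℓ < p) (t : ℤ)
    (hΦ : ∑ i ∈ Finset.range ℓ, u ^ i * v ^ (ℓ - 1 - i) = (p : ℤ) * t) :
    RatModEqP p ((ℓ : ℚ) * fermatQuot p ((u : ℚ) / (v : ℚ)))
      (-(((u : ℚ) - (v : ℚ)) * (t : ℚ)) / (v : ℚ) ^ ℓ) := by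
  haveI : Fact p.Prime := ⟨hp⟩
  set s : ℤ := (u - v) * t with hs
  -- basic numerics
  have hp3 : 3 ≤ p := by
    have := hℓ.two_le; omega
  have hp1 : p - 1 = (p - 2) + 1 := by omega
  -- u^ℓ = v^ℓ + p s
  have h1 : u ^ ℓ = v ^ ℓ + (p : ℤ) * s := by
    have h := geom_sum₂_mul u v ℓ
    rw [hΦ] at h
    simp only [hs]
    linear_combination -h
  -- p does not divide u nor v
  have hpu : ¬ (p : ℤ) ∣ u := by
    intro h
    have hdvdv : (p : ℤ) ∣ v := by
      have : (p : ℤ) ∣ v ^ ℓ := by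
        have : v ^ ℓ = u ^ ℓ - (p : ℤ) * s := by rw [h1]; ring
        rw [this]
        exact dvd_sub (dvd_pow h (Nat.Prime.ne_zero hℓ)) (Dvd.intro s rfl)
      exact (Int.Prime.dvd_pow' (by exact_mod_cast hp) this)
    have := hcop.isUnit_of_dvd' h hdvdv
    rw [Int.isUnit_iff] at this
    have h2 := hp.two_le
    rcases this with h' | h' <;> omega
  have hpv : ¬ (p : ℤ) ∣ v := by
    intro h
    have hdvdu : (p : ℤ) ∣ u := by
      have : (p : ℤ) ∣ u ^ ℓ := by
        rw [h1]
        exact dvd_add (dvd_pow h (Nat.Prime.ne_zero hℓ)) (Dvd.intro s rfl)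
      exact (Int.Prime.dvd_pow' (by exact_mod_cast hp) this)
    have := hcop.isUnit_of_dvd' hdvdu h
    rw [Int.isUnit_iff] at this
    have h2 := hp.two_le
    rcases this with h' | h' <;> omega
  -- Fermat: p ∣ u^(p-1) - v^(p-1)
  have hzu : ((u : ZMod p)) ≠ 0 := by
    rw [Ne, ZMod.intCast_zmod_eq_zero_iff_dvd]; exact hpu
  have hzv : ((v : ZMod p)) ≠ 0 := by
    rw [Ne, ZMod.intCast_zmod_eq_zero_iff_dvd]; exact hpv
  have hfu : ((u : ZMod p)) ^ (p - 1) = 1 := ZMod.pow_card_sub_one_eq_one hzu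
  have hfv : ((v : ZMod p)) ^ (p - 1) = 1 := ZMod.pow_card_sub_one_eq_one hzv
  have hferm : (p : ℤ) ∣ u ^ (p - 1) - v ^ (p - 1) := by
    rw [← ZMod.intCast_zmod_eq_zero_iff_dvd]
    push_cast
    rw [hfu, hfv, sub_self]
  obtain ⟨w, hw⟩ := hferm
  -- the geometric sum for exponent ℓ(p-1)
  set S : ℤ := ∑ i ∈ Finset.range ℓ, (u ^ (p - 1)) ^ i * (v ^ (p - 1)) ^ (ℓ - 1 - i) with hS
  have h4 : (u ^ (p - 1)) ^ ℓ - (v ^ (p - 1)) ^ ℓ = S * ((p : ℤ) * w) := by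
    rw [← hw, ← geom_sum₂_mul (u ^ (p - 1)) (v ^ (p - 1)) ℓ]
  -- binomial mod p^2
  have h3 : ((p : ℤ)) ^ 2 ∣ (u ^ ℓ) ^ (p - 1) - ((v ^ ℓ) ^ (p - 1) + ((p : ℤ) - 1) * (v ^ ℓ) ^ (p - 2) * ((p : ℤ) * s)) := by
    have hcast : ((p : ℤ)) ^ 2 = ((p ^ 2 : ℕ) : ℤ) := by push_cast; ring
    rw [hcast, ← ZMod.intCast_zmod_eq_zero_iff_dvd]
    push_cast
    have hP : ((p : ZMod (p ^ 2)) * (s : ZMod (p ^ 2))) * ((p : ZMod (p ^ 2)) * (s : ZMod (p ^ 2))) = 0 := by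
      have : ((p : ZMod (p ^ 2))) * ((p : ZMod (p ^ 2))) = 0 := by
        have : (((p ^ 2 : ℕ)) : ZMod (p ^ 2)) = 0 := ZMod.natCast_self _
        push_cast at this
        rw [← this]; ring
      calc ((p : ZMod (p ^ 2)) * (s : ZMod (p ^ 2))) * ((p : ZMod (p ^ 2)) * (s : ZMod (p ^ 2)))
          = ((p : ZMod (p ^ 2)) * (p : ZMod (p ^ 2))) * ((s : ZMod (p ^ 2)) * (s : ZMod (p ^ 2))) := by ring
        _ = 0 := by rw [this, zero_mul]
    have hu : ((u : ZMod (p ^ 2))) ^ ℓ = (v : ZMod (p ^ 2)) ^ ℓ + (p : ZMod (p ^ 2)) * (s : ZMod (p ^ 2)) := by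
      have := congrArg (fun z : ℤ => (z : ZMod (p ^ 2))) h1
      push_cast at this
      exact this
    rw [hu, hp1, sq_zero_add_pow _ _ hP (p - 2)]
    have hnat : (((p - 2 : ℕ) : ZMod (p ^ 2)) + 1) = (p : ZMod (p ^ 2)) - 1 := by
      have : ((p : ℕ) : ZMod (p ^ 2)) = (((p - 2 : ℕ) : ZMod (p ^ 2)) + 2) := by
        have : p = (p - 2) + 2 := by omega
        rw [this]; push_cast; ring
      rw [this]; ring
    push_cast
    rw [hnat]
    ring
  -- p ∣ w * S - (p-1) * v^(ℓ(p-2)) * s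
  have h5 : (p : ℤ) ∣ w * S - ((p : ℤ) - 1) * (v ^ ℓ) ^ (p - 2) * s := by
    have he : (u ^ ℓ) ^ (p - 1) - ((v ^ ℓ) ^ (p - 1) + ((p : ℤ) - 1) * (v ^ ℓ) ^ (p - 2) * ((p : ℤ) * s))
        = (p : ℤ) * (w * S - ((p : ℤ) - 1) * (v ^ ℓ) ^ (p - 2) * s) := by
      have e1 : (u ^ ℓ) ^ (p - 1) = (u ^ (p - 1)) ^ ℓ := by rw [← pow_mul, ← pow_mul, Nat.mul_comm]
      have e2 : (v ^ ℓ) ^ (p - 1) = (v ^ (p - 1)) ^ ℓ := by rw [← pow_mul, ← pow_mul, Nat.mul_comm]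
      rw [e1, e2]
      have := h4
      linarith [h4]
    rw [he] at h3
    have hpne : (p : ℤ) ≠ 0 := by exact_mod_cast hp.ne_zero
    rw [sq] at h3
    exact (mul_dvd_mul_iff_left hpne).mp h3
  -- key: p ∣ ℓ * w * v^ℓ + s * v^(p-1)
  have h7 : (p : ℤ) ∣ (ℓ : ℤ) * w * v ^ ℓ + s * v ^ (p - 1) := by
    rw [← ZMod.intCast_zmod_eq_zero_iff_dvd]
    have h5' : ((w : ZMod p)) * (S : ZMod p) - (((p : ℤ) : ZMod p) - 1) * ((v : ZMod p) ^ ℓ) ^ (p - 2) * (s : ZMod p) = 0 := by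
      have := (ZMod.intCast_zmod_eq_zero_iff_dvd _ p).mpr h5
      push_cast at this
      convert this using 2 <;> push_cast <;> ring
    have hpz : (((p : ℤ) : ZMod p)) = 0 := by
      rw [ZMod.intCast_zmod_eq_zero_iff_dvd]
    have hSbar : ((S : ZMod p)) = (ℓ : ZMod p) := by
      rw [hS]
      push_cast
      have : ∀ i ∈ Finset.range ℓ, ((u : ZMod p) ^ (p - 1)) ^ i * ((v : ZMod p) ^ (p - 1)) ^ (ℓ - 1 - i) = 1 := by
        intro i _
        rw [hfu, hfv, one_pow, one_pow, one_mul]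
      rw [Finset.sum_congr rfl this, Finset.sum_const, Finset.card_range, nsmul_eq_mul, mul_one]
    rw [hSbar, hpz, zero_sub] at h5'
    -- h5' : w * ℓ - (-1) * (v^ℓ)^(p-2) * s = 0
    have hkey : (w : ZMod p) * (ℓ : ZMod p) = - ((v : ZMod p) ^ ℓ) ^ (p - 2) * (s : ZMod p) := by
      have := h5'
      linear_combination this
    have hvl : ((v : ZMod p) ^ ℓ) ^ (p - 2) * (v : ZMod p) ^ ℓ = 1 := by
      rw [← pow_succ, ← hp1, ← pow_mul, Nat.mul_comm, pow_mul, hfv, one_pow]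
    push_cast
    rw [hfv]
    calc (ℓ : ZMod p) * (w : ZMod p) * (v : ZMod p) ^ ℓ + (s : ZMod p) * 1
        = ((w : ZMod p) * (ℓ : ZMod p)) * (v : ZMod p) ^ ℓ + (s : ZMod p) := by ring
      _ = (- ((v : ZMod p) ^ ℓ) ^ (p - 2) * (s : ZMod p)) * (v : ZMod p) ^ ℓ + (s : ZMod p) := by rw [hkey]
      _ = - (((v : ZMod p) ^ ℓ) ^ (p - 2) * (v : ZMod p) ^ ℓ) * (s : ZMod p) + (s : ZMod p) := by ring
      _ = 0 := by rw [hvl]; ring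
  obtain ⟨k, hk⟩ := h7
  -- rewrite the rational difference
  have hvQ : (v : ℚ) ≠ 0 := by exact_mod_cast hv.ne'
  have hpQ : (p : ℚ) ≠ 0 := by exact_mod_cast hp.ne_zero
  have hdiff : (ℓ : ℚ) * fermatQuot p ((u : ℚ) / (v : ℚ)) - (-(((u : ℚ) - (v : ℚ)) * (t : ℚ)) / (v : ℚ) ^ ℓ)
      = (p : ℚ) * (k : ℚ) / (v : ℚ) ^ (p - 1 + ℓ) := by
    have hwQ : (u : ℚ) ^ (p - 1) - (v : ℚ) ^ (p - 1) = (p : ℚ) * (w : ℚ) := by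
      exact_mod_cast congrArg (fun z : ℤ => (z : ℚ)) hw
    have hkQ : (ℓ : ℚ) * (w : ℚ) * (v : ℚ) ^ ℓ + ((u : ℚ) - (v : ℚ)) * (t : ℚ) * (v : ℚ) ^ (p - 1) = (p : ℚ) * (k : ℚ) := by
      have := congrArg (fun z : ℤ => (z : ℚ)) hk
      push_cast [hs] at this
      linarith [this]
    rw [fermatQuot, div_pow]
    rw [pow_add]
    field_simp
    linear_combination ((ℓ:ℚ) * (v:ℚ)^ℓ) * hwQ + (p:ℚ) * hkQ
  by_cases hk0 : (k : ℚ) = 0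
  · left
    have : (ℓ : ℚ) * fermatQuot p ((u : ℚ) / (v : ℚ)) - (-(((u : ℚ) - (v : ℚ)) * (t : ℚ)) / (v : ℚ) ^ ℓ) = 0 := by
      rw [hdiff, hk0]; ring
    linarith [this]
  · right
    rw [hdiff]
    have hknum : ((p : ℚ) * (k : ℚ)) ≠ 0 := mul_ne_zero hpQ hk0
    have hvpow : ((v : ℚ) ^ (p - 1 + ℓ)) ≠ 0 := pow_ne_zero _ hvQ
    rw [padicValRat.div hknum hvpow, padicValRat.mul hpQ hk0]
    have h0 : padicValRat p ((v : ℚ) ^ (p - 1 + ℓ)) = 0 := by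
      have : ((v : ℚ) ^ (p - 1 + ℓ)) = (((v ^ (p - 1 + ℓ) : ℤ)) : ℚ) := by push_cast; ring
      rw [this, padicValRat.of_int, padicValInt.eq_zero_of_not_dvd]
      · simp
      · intro h
        exact hpv (Int.Prime.dvd_pow' (by exact_mod_cast hp) h)
    have h1' : padicValRat p (p : ℚ) = 1 := padicValRat.self hp.one_lt
    have h2' : (0 : ℤ) ≤ padicValRat p (k : ℚ) := by
      rw [padicValRat.of_int]
      exact Int.natCast_nonneg _
    rw [h0, h1']
    omega
end

section
/- Let α be a rational number with |α| ≠ 1 and α ≠ 0. Then log_A(α) is not equal to any nonzero rational number in A. Equivalently, for every pair of integers a ≠ 0 and b > 0, there exist infinitely many primes p with b·q_p(α) ≢ a (mod p), where q_p(α) = (α^{p−1} − 1)/p is the Fermat quotient. -/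
open Finset

private lemma int_eq_zero_of_natCast_dvd {n : ℕ} {m : ℤ} (h : (n : ℤ) ∣ m)
    (h2 : m.natAbs < n) : m = 0 := by
  have h' : n ∣ m.natAbs := Int.natCast_dvd.mp h
  rcases Nat.eq_zero_or_pos m.natAbs with h0 | h0
  · exact Int.natAbs_eq_zero.mp h0
  · exact absurd (Nat.le_of_dvd h0 h') (by omega)

private lemma not_dvd_of_natAbs_lt {p : ℕ} {m : ℤ} (hm : m ≠ 0) (h2 : m.natAbs < p) :
    ¬ (p : ℤ) ∣ m := fun h => hm (int_eq_zero_of_natCast_dvd h h2)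

private lemma binom_two (v k : ℕ) : v ^ (k + 1) + (k + 1) * v ^ k ≤ (v + 1) ^ (k + 1) := by
  induction k with
  | zero => simp [pow_succ]
  | succ k ih =>
    have key : (v ^ (k+1) + (k+1) * v ^ k) * (v + 1)
        = v ^ (k+2) + (k+2) * v ^ (k+1) + (k+1) * v ^ k := by ring
    calc v ^ (k+2) + (k+2) * v ^ (k+1)
        ≤ (v ^ (k+1) + (k+1) * v ^ k) * (v + 1) := by rw [key]; exact Nat.le_add_right _ _
      _ ≤ (v + 1) ^ (k+1) * (v + 1) := Nat.mul_le_mul_right _ ih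
      _ = (v + 1) ^ (k+2) := by ring

private lemma growth (u v A k : ℕ) (huv : v < u) (hk : 12 * A * v ^ 3 ≤ k + 1) :
    4 * A * (2 * (k + 1) + 1) * v ^ (2 * (k + 1) + 1) ≤ u ^ (2 * (k + 1)) := by
  have h1 : (k + 1) * v ^ k ≤ (v + 1) ^ (k + 1) :=
    le_trans (Nat.le_add_left _ _) (binom_two v k)
  have h2 : ((k + 1) * v ^ k) ^ 2 ≤ ((v + 1) ^ (k + 1)) ^ 2 := Nat.pow_le_pow_left h1 2
  have h3 : ((v + 1) ^ (k + 1)) ^ 2 ≤ u ^ (2 * (k + 1)) := by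
    have h3' : (v + 1 : ℕ) ^ (2 * (k + 1)) ≤ u ^ (2 * (k + 1)) :=
      Nat.pow_le_pow_left (by omega) _
    calc ((v + 1) ^ (k + 1)) ^ 2 = (v + 1) ^ (2 * (k + 1)) := by
          rw [← pow_mul, Nat.mul_comm]
      _ ≤ u ^ (2 * (k + 1)) := h3'
  have h4 : 4 * A * (2 * (k + 1) + 1) * v ^ 3 ≤ (k + 1) ^ 2 := by nlinarith
  calc 4 * A * (2 * (k + 1) + 1) * v ^ (2 * (k + 1) + 1)
      = (4 * A * (2 * (k + 1) + 1) * v ^ 3) * v ^ (2 * k) := by ring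
    _ ≤ (k + 1) ^ 2 * v ^ (2 * k) := Nat.mul_le_mul_right _ h4
    _ = ((k + 1) * v ^ k) ^ 2 := by ring
    _ ≤ u ^ (2 * (k + 1)) := le_trans h2 h3

private lemma phi_mul (u v ℓ : ℕ) :
    ((u : ℤ) - v) * ((∑ i ∈ range ℓ, u ^ i * v ^ (ℓ - 1 - i) : ℕ) : ℤ)
      = (u : ℤ) ^ ℓ - (v : ℤ) ^ ℓ := by
  push_cast
  rw [mul_comm]
  exact geom_sum₂_mul (u : ℤ) (v : ℤ) ℓ

private lemma perPrimeA (u v ℓ p : ℕ)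
    (hv : 1 ≤ v) (huv : v < u) (hcop : Nat.Coprime u v)
    (hℓ : ℓ.Prime) (huℓ : u < ℓ)
    (hp : p.Prime) (hpΦ : p ∣ ∑ i ∈ range ℓ, u ^ i * v ^ (ℓ - 1 - i)) :
    ℓ ∣ p - 1 ∧ 2 * ℓ + 1 ≤ p ∧ ¬ p ∣ v := by
  have hℓ2 : 2 ≤ ℓ := hℓ.two_le
  have hℓ0 : ℓ ≠ 0 := by omega
  set Φ : ℕ := ∑ i ∈ range ℓ, u ^ i * v ^ (ℓ - 1 - i) with hΦdef
  have hpN : (p : ℤ) ∣ (u : ℤ) ^ ℓ - (v : ℤ) ^ ℓ := by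
    rw [← phi_mul u v ℓ]
    exact Dvd.dvd.mul_left (Int.natCast_dvd_natCast.mpr hpΦ) _
  have hpv : ¬ p ∣ v := by
    intro hdvd
    have h1 : (p : ℤ) ∣ (v : ℤ) ^ ℓ := dvd_pow (Int.natCast_dvd_natCast.mpr hdvd) hℓ0
    have h2 : (p : ℤ) ∣ (u : ℤ) ^ ℓ := by
      have := dvd_add hpN h1
      simpa using this
    have h3 : p ∣ u := hp.dvd_of_dvd_pow (Int.natCast_dvd_natCast.mp (by exact_mod_cast h2))
    have := Nat.dvd_gcd h3 hdvd
    rw [hcop] at this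
    exact hp.one_lt.ne' (Nat.dvd_one.mp this)
  have hpu : ¬ p ∣ u := by
    intro hdvd
    have h1 : (p : ℤ) ∣ (u : ℤ) ^ ℓ := dvd_pow (Int.natCast_dvd_natCast.mpr hdvd) hℓ0
    have h2 : (p : ℤ) ∣ (v : ℤ) ^ ℓ := by
      have := dvd_sub h1 hpN
      simpa using this
    have h3 : p ∣ v := hp.dvd_of_dvd_pow (Int.natCast_dvd_natCast.mp (by exact_mod_cast h2))
    exact hpv h3
  haveI : Fact p.Prime := ⟨hp⟩
  have huz : (u : ZMod p) ≠ 0 := by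
    rw [Ne, ZMod.natCast_eq_zero_iff]; exact hpu
  have hvz : (v : ZMod p) ≠ 0 := by
    rw [Ne, ZMod.natCast_eq_zero_iff]; exact hpv
  have hpow : (u : ZMod p) ^ ℓ = (v : ZMod p) ^ ℓ := by
    have : (((u : ℤ) ^ ℓ - (v : ℤ) ^ ℓ : ℤ) : ZMod p) = 0 :=
      (ZMod.intCast_zmod_eq_zero_iff_dvd _ p).mpr hpN
    push_cast at this
    linear_combination this
  set g : ZMod p := (u : ZMod p) / (v : ZMod p) with hgdef
  have hg1 : g ^ ℓ = 1 := by
    rw [hgdef, div_pow, hpow, div_self (pow_ne_zero _ hvz)]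
  have horder : orderOf g ∣ ℓ := orderOf_dvd_of_pow_eq_one hg1
  have hg0 : g ≠ 0 := div_ne_zero huz hvz
  rcases (Nat.Prime.eq_one_or_self_of_dvd hℓ _ horder) with h1 | h1
  · -- order 1 : u ≡ v mod p, leads to contradiction
    exfalso
    have hguv : (u : ZMod p) = (v : ZMod p) := by
      have := orderOf_eq_one_iff.mp h1
      rw [hgdef] at this
      have h2 : (u : ZMod p) = g * (v : ZMod p) := (div_mul_cancel₀ _ hvz).symm
      rw [hgdef, this, one_mul] at h2
      exact h2
    have hpuv : p ∣ u - v := by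
      have : v ≡ u [MOD p] := (ZMod.natCast_eq_natCast_iff _ _ _).mp hguv.symm
      exact (Nat.modEq_iff_dvd' (le_of_lt huv)).mp this
    have hpuvZ : (p : ℤ) ∣ (u : ℤ) - v := by
      have := Int.natCast_dvd_natCast.mpr hpuv
      rwa [Nat.cast_sub (le_of_lt huv)] at this
    -- p ∣ Φ - ℓ v^(ℓ-1)
    have hkey : (p : ℤ) ∣ (Φ : ℤ) - ℓ * (v : ℤ) ^ (ℓ - 1) := by
      have heq : (Φ : ℤ) - ℓ * (v : ℤ) ^ (ℓ - 1)
          = ∑ i ∈ range ℓ, ((u : ℤ) ^ i - (v : ℤ) ^ i) * (v : ℤ) ^ (ℓ - 1 - i) := by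
        rw [hΦdef]
        push_cast
        have hsplit : ∑ i ∈ range ℓ, ((u : ℤ) ^ i - (v : ℤ) ^ i) * (v : ℤ) ^ (ℓ - 1 - i)
            = (∑ i ∈ range ℓ, (u : ℤ) ^ i * (v : ℤ) ^ (ℓ - 1 - i))
              - ∑ i ∈ range ℓ, (v : ℤ) ^ i * (v : ℤ) ^ (ℓ - 1 - i) := by
          rw [← Finset.sum_sub_distrib]
          exact Finset.sum_congr rfl fun i _ => by ring
        have hconst : ∑ i ∈ range ℓ, (v : ℤ) ^ i * (v : ℤ) ^ (ℓ - 1 - i)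
            = ∑ _i ∈ range ℓ, (v : ℤ) ^ (ℓ - 1) := by
          apply Finset.sum_congr rfl
          intro i hi
          rw [← pow_add]
          congr 1
          have := mem_range.mp hi
          omega
        rw [hsplit, hconst, Finset.sum_const, card_range, nsmul_eq_mul]
      rw [heq]
      apply Finset.dvd_sum
      intro i _
      exact Dvd.dvd.mul_right (dvd_trans hpuvZ (sub_dvd_pow_sub_pow _ _ i)) _
    have hΦZ : (p : ℤ) ∣ (Φ : ℤ) := Int.natCast_dvd_natCast.mpr hpΦ
    have h2 : (p : ℤ) ∣ (ℓ : ℤ) * (v : ℤ) ^ (ℓ - 1) := by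
      have := dvd_sub hΦZ hkey
      simpa using this
    have h3 : p ∣ ℓ * v ^ (ℓ - 1) := Int.natCast_dvd_natCast.mp (by exact_mod_cast h2)
    rcases (Nat.Prime.dvd_mul hp).mp h3 with h4 | h4
    · have hpeq : p = ℓ := (Nat.prime_dvd_prime_iff_eq hp hℓ).mp h4
      subst hpeq
      have h5 : p ≤ u - v := Nat.le_of_dvd (by omega) hpuv
      omega
    · exact hpv (hp.dvd_of_dvd_pow h4)
  · -- order ℓ : ℓ ∣ p - 1
    have hgp : g ^ (p - 1) = 1 := ZMod.pow_card_sub_one_eq_one hg0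
    have hℓp1 : ℓ ∣ p - 1 := h1 ▸ orderOf_dvd_of_pow_eq_one hgp
    refine ⟨hℓp1, ?_, hpv⟩
    obtain ⟨m, hm⟩ := hℓp1
    have hp2 : 2 ≤ p := hp.two_le
    have hm0 : m ≠ 0 := by
      rintro rfl
      omega
    have hm1 : m ≠ 1 := by
      rintro rfl
      -- p = ℓ + 1, ℓ odd, p even prime > 2
      have hpeq : p = ℓ + 1 := by omega
      have hℓodd : Odd ℓ := hℓ.odd_of_ne_two (by omega)
      have hpeven : Even p := by
        rcases hℓodd with ⟨t, ht⟩
        exact ⟨t + 1, by omega⟩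
      have := (Nat.Prime.even_iff hp).mp hpeven
      omega
    have : 2 * ℓ ≤ ℓ * m := by
      have : 2 ≤ m := by omega
      calc 2 * ℓ = ℓ * 2 := by ring
        _ ≤ ℓ * m := Nat.mul_le_mul_left _ this
    omega

private lemma perPrimeB (u v ℓ p : ℕ) (b c : ℤ)
    (hv : 1 ≤ v) (huv : v < u)
    (hb : 0 < b) (hc : c ≠ 0)
    (hℓ : ℓ.Prime) (hcℓ : c.natAbs < ℓ)
    (hp : p.Prime)
    (hpΦ : p ∣ ∑ i ∈ range ℓ, u ^ i * v ^ (ℓ - 1 - i))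
    (hℓp1 : ℓ ∣ p - 1) (h2ℓ : 2 * ℓ + 1 ≤ p) (hpv : ¬ p ∣ v)
    (H : (p : ℤ) ^ 2 ∣ b * ((u : ℤ) ^ (p - 1) - (v : ℤ) ^ (p - 1)) - c * p * (v : ℤ) ^ (p - 1)) :
    ¬ (p * p ∣ ∑ i ∈ range ℓ, u ^ i * v ^ (ℓ - 1 - i)) ∧
      (p : ℤ) ∣ (b * ((u : ℤ) - v) * (((∑ i ∈ range ℓ, u ^ i * v ^ (ℓ - 1 - i)) / p : ℕ) : ℤ)
        + c * ℓ * (v : ℤ) ^ ℓ) := by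
  have hℓ2 : 2 ≤ ℓ := hℓ.two_le
  have hp2 : 2 ≤ p := hp.two_le
  have hpne : (p : ℤ) ≠ 0 := by positivity
  set Φ : ℕ := ∑ i ∈ range ℓ, u ^ i * v ^ (ℓ - 1 - i) with hΦdef
  obtain ⟨m, hm⟩ := hℓp1
  have hm2 : 2 ≤ m := by
    by_contra hcon
    interval_cases m <;> omega
  have hmℓ : (ℓ : ℤ) * m = (p : ℤ) - 1 := by
    have := congrArg (Nat.cast : ℕ → ℤ) hm
    push_cast [Nat.cast_sub (by omega : 1 ≤ p)] at this
    omega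
  set A : ℤ := (u : ℤ) ^ ℓ with hAdef
  set B : ℤ := (v : ℤ) ^ ℓ with hBdef
  set S : ℤ := ∑ i ∈ range m, A ^ i * B ^ (m - 1 - i) with hSdef
  have hfac : (u : ℤ) ^ (p - 1) - (v : ℤ) ^ (p - 1) = (A - B) * S := by
    rw [hm, pow_mul, pow_mul, mul_comm (A - B) S]
    exact (geom_sum₂_mul A B m).symm
  have hAB : A - B = ((u : ℤ) - v) * Φ := (phi_mul u v ℓ).symm
  have hpΦZ : (p : ℤ) ∣ (Φ : ℤ) := Int.natCast_dvd_natCast.mpr hpΦ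
  have hpAB : (p : ℤ) ∣ A - B := hAB ▸ Dvd.dvd.mul_left hpΦZ _
  have hpvZ : ¬ (p : ℤ) ∣ (v : ℤ) := fun h => hpv (Int.natCast_dvd_natCast.mp h)
  have hppZ : Prime (p : ℤ) := Int.prime_iff_natAbs_prime.mpr (by simpa using hp)
  have hcnot : ¬ (p : ℤ) ∣ c := not_dvd_of_natAbs_lt hc (by omega)
  -- squarefreeness at p
  have hsq : ¬ (p * p ∣ Φ) := by
    intro hsq
    have h1 : (p : ℤ) ^ 2 ∣ (Φ : ℤ) := by
      have := Int.natCast_dvd_natCast.mpr hsq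
      push_cast at this
      rwa [← sq] at this
    have h2 : (p : ℤ) ^ 2 ∣ b * ((u : ℤ) ^ (p - 1) - (v : ℤ) ^ (p - 1)) := by
      rw [hfac, hAB]
      exact Dvd.dvd.mul_left (Dvd.dvd.mul_right (Dvd.dvd.mul_left h1 _) S) b
    have h3 : (p : ℤ) ^ 2 ∣ c * p * (v : ℤ) ^ (p - 1) := by
      have hd := dvd_sub h2 H
      have heq : b * ((u : ℤ) ^ (p - 1) - (v : ℤ) ^ (p - 1))
          - (b * ((u : ℤ) ^ (p - 1) - (v : ℤ) ^ (p - 1)) - c * p * (v : ℤ) ^ (p - 1))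
          = c * p * (v : ℤ) ^ (p - 1) := by ring
      rwa [heq] at hd
    have h4 : (p : ℤ) ∣ c * (v : ℤ) ^ (p - 1) := by
      obtain ⟨t, ht⟩ := h3
      refine ⟨t, ?_⟩
      apply mul_left_cancel₀ hpne
      calc (p : ℤ) * (c * (v : ℤ) ^ (p - 1)) = c * p * (v : ℤ) ^ (p - 1) := by ring
        _ = (p : ℤ) ^ 2 * t := ht
        _ = (p : ℤ) * ((p : ℤ) * t) := by ring
    rcases hppZ.dvd_mul.mp h4 with h5 | h5
    · exact hcnot h5
    · exact hpvZ (hppZ.dvd_of_dvd_pow h5)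
  refine ⟨hsq, ?_⟩
  set Ψ : ℕ := Φ / p with hΨdef
  have hΨ : (Φ : ℤ) = p * Ψ := by
    have := Nat.mul_div_cancel' hpΦ
    exact_mod_cast this.symm
  -- S ≡ m * B^(m-1) mod p
  have hS : (p : ℤ) ∣ S - m * B ^ (m - 1) := by
    have hconst : (m : ℤ) * B ^ (m - 1) = ∑ i ∈ range m, B ^ i * B ^ (m - 1 - i) := by
      have : ∑ i ∈ range m, B ^ i * B ^ (m - 1 - i) = ∑ _i ∈ range m, B ^ (m - 1) := by
        apply Finset.sum_congr rfl
        intro i hi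
        rw [← pow_add]
        congr 1
        have := mem_range.mp hi
        omega
      rw [this, Finset.sum_const, card_range, nsmul_eq_mul]
    rw [hSdef, hconst, ← Finset.sum_sub_distrib]
    apply Finset.dvd_sum
    intro i _
    have hterm : A ^ i * B ^ (m - 1 - i) - B ^ i * B ^ (m - 1 - i)
        = (A ^ i - B ^ i) * B ^ (m - 1 - i) := by ring
    rw [hterm]
    exact Dvd.dvd.mul_right (dvd_trans hpAB (sub_dvd_pow_sub_pow A B i)) _
  -- p ∣ T
  have hT : (p : ℤ) ∣ b * ((u : ℤ) - v) * Ψ * S - c * (v : ℤ) ^ (p - 1) := by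
    obtain ⟨t, ht⟩ := H
    refine ⟨t, ?_⟩
    apply mul_left_cancel₀ hpne
    calc (p : ℤ) * (b * ((u : ℤ) - v) * Ψ * S - c * (v : ℤ) ^ (p - 1))
        = b * ((u : ℤ) ^ (p - 1) - (v : ℤ) ^ (p - 1)) - c * p * (v : ℤ) ^ (p - 1) := by
          rw [hfac, hAB, hΨ]; ring
      _ = (p : ℤ) ^ 2 * t := ht
      _ = (p : ℤ) * ((p : ℤ) * t) := by ring
  have hvp : (v : ℤ) ^ (p - 1) = B ^ (m - 1) * B := by
    rw [hm, pow_mul, ← pow_succ]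
    congr 1
    omega
  have hT2 : (p : ℤ) ∣ (b * ((u : ℤ) - v) * Ψ * m - c * B) * B ^ (m - 1) := by
    have h1 : (p : ℤ) ∣ b * ((u : ℤ) - v) * Ψ * (S - m * B ^ (m - 1)) := hS.mul_left _
    have h2 := dvd_sub hT h1
    have heq : b * ((u : ℤ) - v) * Ψ * S - c * (v : ℤ) ^ (p - 1)
        - b * ((u : ℤ) - v) * Ψ * (S - m * B ^ (m - 1))
        = (b * ((u : ℤ) - v) * Ψ * m - c * B) * B ^ (m - 1) := by
      rw [hvp]; ring
    rwa [heq] at h2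
  have hT3 : (p : ℤ) ∣ b * ((u : ℤ) - v) * Ψ * m - c * B := by
    rcases hppZ.dvd_mul.mp hT2 with h | h
    · exact h
    · have h' : (p : ℤ) ∣ B := hppZ.dvd_of_dvd_pow h
      rw [hBdef] at h'
      exact absurd (hppZ.dvd_of_dvd_pow h') hpvZ
  have h1 : (p : ℤ) ∣ (b * ((u : ℤ) - v) * Ψ * m - c * B) * ℓ := hT3.mul_right _
  have h2 : (p : ℤ) ∣ b * ((u : ℤ) - v) * Ψ * p := dvd_mul_left _ _
  have h3 := dvd_sub h2 h1
  have key : b * ((u : ℤ) - v) * Ψ * p - (b * ((u : ℤ) - v) * Ψ * m - c * B) * ℓ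
      = b * ((u : ℤ) - v) * Ψ + c * ℓ * B := by
    linear_combination (-(b * ((u : ℤ) - v) * (Ψ : ℤ))) * hmℓ
  rwa [key] at h3

private lemma step_dvd (b c X Y : ℤ) (p : ℕ) (hp : p.Prime) (hbp : ¬ (p : ℤ) ∣ b)
    (H : (p : ℤ) ^ 2 ∣ b * (X - Y) - c * p * Y) : (p : ℤ) ∣ X - Y := by
  have hppZ : Prime (p : ℤ) := Int.prime_iff_natAbs_prime.mpr (by simpa using hp)
  have h1 : (p : ℤ) ∣ b * (X - Y) - c * p * Y :=
    (dvd_pow_self (p : ℤ) two_ne_zero).trans H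
  have h3 : (p : ℤ) ∣ c * p * Y := ⟨c * Y, by ring⟩
  have h2 : (p : ℤ) ∣ b * (X - Y) := by
    have h4 := dvd_add h1 h3
    rwa [sub_add_cancel] at h4
  exact (hppZ.dvd_mul.mp h2).resolve_left hbp

private lemma step2 (b c X Y : ℤ) (p : ℕ) (hp : p.Prime) (hbp : ¬ (p : ℤ) ∣ b)
    (H : (p : ℤ) ^ 2 ∣ b * (X - Y) - c * p * Y) :
    (p : ℤ) ^ 2 ∣ b * (X ^ 2 - Y ^ 2) - (2 * c) * p * Y ^ 2 := by
  obtain ⟨s, hs⟩ := step_dvd b c X Y p hp hbp H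
  obtain ⟨t, ht⟩ := H
  refine ⟨(X + Y) * t + c * Y * s, ?_⟩
  linear_combination (X + Y) * ht + (c * Y * (p : ℤ)) * hs

private lemma stepSwap (b c X Y : ℤ) (p : ℕ) (hp : p.Prime) (hbp : ¬ (p : ℤ) ∣ b)
    (H : (p : ℤ) ^ 2 ∣ b * (X - Y) - c * p * Y) :
    (p : ℤ) ^ 2 ∣ b * (Y - X) - (-c) * p * X := by
  obtain ⟨s, hs⟩ := step_dvd b c X Y p hp hbp H
  obtain ⟨t, ht⟩ := H
  refine ⟨-t + c * s, ?_⟩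
  linear_combination (-1 : ℤ) * ht + (c * (p : ℤ)) * hs

private lemma toIntHyp (α : ℚ) (a b : ℤ) (p : ℕ) (hp : p.Prime)
    (hpden : α.den < p) (h : RatModEqP p ((b : ℚ) * fermatQuot p α) a) :
    (p : ℤ) ^ 2 ∣ b * (α.num ^ (p - 1) - (α.den : ℤ) ^ (p - 1))
      - a * p * (α.den : ℤ) ^ (p - 1) := by
  haveI : Fact p.Prime := ⟨hp⟩
  have hp2 : 2 ≤ p := hp.two_le
  set x : ℤ := α.num with hxdef
  set y : ℤ := (α.den : ℤ) with hydef
  have hy0 : y ≠ 0 := by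
    rw [hydef]
    exact_mod_cast Nat.pos_iff_ne_zero.mp α.pos
  have hyQ : ((α.den : ℚ)) ≠ 0 := by exact_mod_cast Nat.pos_iff_ne_zero.mp α.pos
  have hpQ : ((p : ℚ)) ≠ 0 := by positivity
  have hpZ : ((p : ℤ)) ≠ 0 := by positivity
  set n : ℤ := b * (x ^ (p - 1) - y ^ (p - 1)) - a * p * y ^ (p - 1) with hndef
  have hαxy : (α : ℚ) = (x : ℚ) / (y : ℚ) := by
    rw [hxdef, hydef]
    push_cast
    exact (Rat.num_div_den α).symm
  have hkey : (b : ℚ) * fermatQuot p α - a = (n : ℚ) / ((p : ℚ) * (y : ℚ) ^ (p - 1)) := by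
    rw [fermatQuot, hαxy, hndef]
    have hyQ' : ((y : ℚ)) ≠ 0 := by
      rw [hydef]; push_cast; exact hyQ
    rw [div_pow]
    field_simp
    push_cast
    ring
  rcases h with heq | hval
  · have h0 : (n : ℚ) / ((p : ℚ) * (y : ℚ) ^ (p - 1)) = 0 := by
      rw [← hkey, heq, sub_self]
    have hd0 : ((p : ℚ) * (y : ℚ) ^ (p - 1)) ≠ 0 := by
      apply mul_ne_zero hpQ
      apply pow_ne_zero
      exact_mod_cast hy0
    have hn0 : (n : ℚ) = 0 := by
      rcases div_eq_zero_iff.mp h0 with h' | h'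
      · exact h'
      · exact absurd h' hd0
    have : n = 0 := by exact_mod_cast hn0
    rw [this]
    exact dvd_zero _
  · rw [hkey] at hval
    have hn0 : n ≠ 0 := by
      intro h0
      rw [h0] at hval
      norm_num at hval
    have hd0 : ((p : ℤ) * y ^ (p - 1)) ≠ 0 := mul_ne_zero hpZ (pow_ne_zero _ hy0)
    have hcast : (n : ℚ) / ((p : ℚ) * (y : ℚ) ^ (p - 1))
        = ((n : ℤ) : ℚ) / ((((p : ℤ) * y ^ (p - 1) : ℤ)) : ℚ) := by
      push_cast
      ring
    rw [hcast, padicValRat.div (by exact_mod_cast hn0) (by exact_mod_cast hd0),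
      padicValRat.of_int, padicValRat.of_int] at hval
    have hpy : ¬ (p : ℤ) ∣ y := by
      intro hdvd
      have h1 : (p : ℕ) ∣ α.den := by
        rw [hydef] at hdvd
        exact_mod_cast hdvd
      have := Nat.le_of_dvd α.pos h1
      omega
    have hval1 : padicValInt p ((p : ℤ) * y ^ (p - 1)) = 1 := by
      rw [padicValInt.mul hpZ (pow_ne_zero _ hy0), padicValInt.self hp.one_lt,
        padicValInt.eq_zero_of_not_dvd]
      intro hdvd
      have hppZ : Prime (p : ℤ) := Int.prime_iff_natAbs_prime.mpr (by simpa using hp)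
      exact hpy (hppZ.dvd_of_dvd_pow hdvd)
    rw [hval1] at hval
    have h2 : 2 ≤ padicValInt p n := by omega
    exact (padicValInt_dvd_iff 2 n).mpr (Or.inr h2)

private lemma core (u v : ℕ) (hv : 1 ≤ v) (huv : v < u) (hcop : Nat.Coprime u v)
    (b c : ℤ) (hb : 0 < b) (hc : c ≠ 0) (P : ℕ)
    (H : ∀ p : ℕ, p.Prime → P < p →
      (p : ℤ) ^ 2 ∣ b * ((u : ℤ) ^ (p - 1) - (v : ℤ) ^ (p - 1)) - c * p * (v : ℤ) ^ (p - 1)) :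
    False := by
  have hu2 : 2 ≤ u := by omega
  have hb1 : 1 ≤ b.natAbs := by
    have hb0 : b.natAbs ≠ 0 := fun h => (ne_of_gt hb) (Int.natAbs_eq_zero.mp h)
    omega
  have hc1 : 1 ≤ c.natAbs := by
    have hc0 : c.natAbs ≠ 0 := fun h => hc (Int.natAbs_eq_zero.mp h)
    omega
  set M : ℕ := 4 * b.natAbs * (u - v) with hMdef
  have hM4 : 4 ≤ M := by
    calc 4 = 4 * 1 * 1 := by norm_num
      _ ≤ 4 * b.natAbs * (u - v) := Nat.mul_le_mul (Nat.mul_le_mul_left 4 hb1) (by omega)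
  set t1 : ℕ := u ^ (2 * M) with ht1def
  set t2 : ℕ := c.natAbs * v ^ 3 with ht2def
  set K : ℕ := P + u + c.natAbs + b.natAbs + t1 + 24 * t2 + 2 with hKdef
  obtain ⟨ℓ, hKℓ, hℓ⟩ := Nat.exists_infinite_primes (K + 1)
  have hℓ2 : 2 ≤ ℓ := hℓ.two_le
  have huℓ : u < ℓ := by omega
  have hcℓ : c.natAbs < ℓ := by omega
  have hbℓ : b.natAbs < ℓ := by omega
  have hPℓ : P < ℓ := by omega
  have ht1ℓ : t1 ≤ ℓ := by omega
  have ht2ℓ : 24 * t2 + 2 ≤ ℓ := by omega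
  -- Φ and its basic bounds
  set Φ : ℕ := ∑ i ∈ range ℓ, u ^ i * v ^ (ℓ - 1 - i) with hΦdef
  have hΦlb : u ^ (ℓ - 1) ≤ Φ := by
    have hmem : ℓ - 1 ∈ range ℓ := mem_range.mpr (by omega)
    have h := Finset.single_le_sum (f := fun i => u ^ i * v ^ (ℓ - 1 - i))
      (fun i _ => Nat.zero_le _) hmem
    simpa using h
  have hΦub : Φ ≤ ℓ * u ^ (ℓ - 1) := by
    have h := Finset.sum_le_card_nsmul (range ℓ) (fun i => u ^ i * v ^ (ℓ - 1 - i))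
      (u ^ (ℓ - 1)) ?_
    · simpa [card_range, smul_eq_mul] using h
    · intro i hi
      have hi' : i < ℓ := mem_range.mp hi
      calc u ^ i * v ^ (ℓ - 1 - i) ≤ u ^ i * u ^ (ℓ - 1 - i) :=
            Nat.mul_le_mul_left _ (Nat.pow_le_pow_left (by omega) _)
        _ = u ^ (ℓ - 1) := by rw [← pow_add]; congr 1; omega
  have hΦ2 : 2 ≤ Φ := by
    have h1 : 2 ^ (ℓ - 1) ≤ u ^ (ℓ - 1) := Nat.pow_le_pow_left hu2 _
    have h2 : 2 ≤ 2 ^ (ℓ - 1) := by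
      calc 2 = 2 ^ 1 := rfl
        _ ≤ 2 ^ (ℓ - 1) := Nat.pow_le_pow_right (by omega) (by omega)
    omega
  have hΦ0 : Φ ≠ 0 := by omega
  -- prime factors
  set pf := Φ.primeFactors with hpfdef
  have hmemf : ∀ p ∈ pf, p.Prime ∧ p ∣ Φ := fun p hp =>
    ⟨Nat.prime_of_mem_primeFactors hp, Nat.dvd_of_mem_primeFactors hp⟩
  have hAfact : ∀ p ∈ pf, ℓ ∣ p - 1 ∧ 2 * ℓ + 1 ≤ p ∧ ¬ p ∣ v := fun p hp =>
    perPrimeA u v ℓ p hv huv hcop hℓ huℓ (hmemf p hp).1 (hmemf p hp).2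
  have hBfact : ∀ p ∈ pf, ¬ (p * p ∣ Φ) ∧
      (p : ℤ) ∣ (b * ((u : ℤ) - v) * ((Φ / p : ℕ) : ℤ) + c * ℓ * (v : ℤ) ^ ℓ) := by
    intro p hp
    obtain ⟨h1, h2, h3⟩ := hAfact p hp
    have hPp : P < p := by omega
    exact perPrimeB u v ℓ p b c hv huv hb hc hℓ hcℓ (hmemf p hp).1 (hmemf p hp).2 h1 h2 h3
      (H p (hmemf p hp).1 hPp)
  have hsf : Squarefree Φ := by
    rw [Nat.squarefree_iff_prime_squarefree]
    intro q hq hqq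
    have hq' : q.Prime := hq
    have hqΦ : q ∣ Φ := (dvd_mul_right q q).trans hqq
    have hqpf : q ∈ pf := Nat.mem_primeFactors.mpr ⟨hq', hqΦ, hΦ0⟩
    exact (hBfact q hqpf).1 hqq
  have hprod : ∏ p ∈ pf, p = Φ := Nat.prod_primeFactors_of_squarefree hsf
  set k := pf.card with hkdef
  set σ : ℕ := ∑ p ∈ pf, Φ / p with hσdef
  set X : ℤ := b * ((u : ℤ) - v) * σ + c * ℓ * (v : ℤ) ^ ℓ with hXdef
  -- each p ∈ pf divides X
  have hpX : ∀ p ∈ pf, (p : ℤ) ∣ X := by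
    intro p hp
    have h4 := (hBfact p hp).2
    have hsplit : (σ : ℤ) = ((Φ / p : ℕ) : ℤ) + ((∑ q ∈ pf.erase p, Φ / q : ℕ) : ℤ) := by
      rw [hσdef]
      push_cast
      rw [← Finset.add_sum_erase _ _ hp]
    have hrest : (p : ℤ) ∣ ((∑ q ∈ pf.erase p, Φ / q : ℕ) : ℤ) := by
      have hnat : p ∣ ∑ q ∈ pf.erase p, Φ / q := by
        apply Finset.dvd_sum
        intro q hq
        have hqpf : q ∈ pf := Finset.mem_of_mem_erase hq
        have hqp : q ≠ p := Finset.ne_of_mem_erase hq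
        have hqdvd : q ∣ Φ := (hmemf q hqpf).2
        have hΦq : Φ = q * (Φ / q) := (Nat.mul_div_cancel' hqdvd).symm
        have hpdvd : p ∣ q * (Φ / q) := hΦq ▸ (hmemf p hp).2
        rcases (Nat.Prime.dvd_mul (hmemf p hp).1).mp hpdvd with h | h
        · exact absurd ((Nat.prime_dvd_prime_iff_eq (hmemf p hp).1 (hmemf q hqpf).1).mp h)
            (fun he => hqp he.symm)
        · exact h
      exact_mod_cast hnat
    have hXeq : X = (b * ((u : ℤ) - v) * ((Φ / p : ℕ) : ℤ) + c * ℓ * (v : ℤ) ^ ℓ)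
        + b * ((u : ℤ) - v) * ((∑ q ∈ pf.erase p, Φ / q : ℕ) : ℤ) := by
      rw [hXdef, hsplit]; ring
    rw [hXeq]
    exact dvd_add h4 (hrest.mul_left _)
  -- Φ ∣ X
  have hΦX : (Φ : ℤ) ∣ X := by
    have hnat : Φ ∣ X.natAbs := by
      rw [← hprod]
      apply Finset.prod_primes_dvd
      · intro q hq
        exact Nat.prime_iff.mp (hmemf q hq).1
      · intro q hq
        exact Int.natCast_dvd.mp (hpX q hq)
    exact Int.natCast_dvd.mpr hnat
  -- size bounds
  have hk1 : (2 * ℓ + 1) ^ k ≤ Φ := by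
    rw [← hprod, hkdef]
    exact Finset.pow_card_le_prod pf _ _ (fun p hp => (hAfact p hp).2.1)
  have hk2 : Φ ≤ u ^ (2 * ℓ) := by
    have h1 : ℓ ≤ u ^ ℓ := le_trans (le_of_lt ℓ.lt_two_pow_self) (Nat.pow_le_pow_left hu2 ℓ)
    have h2 : u ^ (ℓ - 1) ≤ u ^ ℓ := Nat.pow_le_pow_right (by omega) (by omega)
    calc Φ ≤ ℓ * u ^ (ℓ - 1) := hΦub
      _ ≤ u ^ ℓ * u ^ ℓ := Nat.mul_le_mul h1 h2
      _ = u ^ (2 * ℓ) := by rw [← pow_add]; congr 1; omega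
  have hMk : M * k ≤ ℓ := by
    have h1 : (u ^ (2 * M)) ^ k ≤ (2 * ℓ + 1) ^ k := Nat.pow_le_pow_left (by omega) k
    have h2 : u ^ (2 * M * k) ≤ u ^ (2 * ℓ) := by
      rw [pow_mul]
      exact le_trans h1 (le_trans hk1 hk2)
    have h3 : 2 * M * k ≤ 2 * ℓ := (Nat.pow_le_pow_iff_right hu2).mp h2
    have h4 : 2 * (M * k) = 2 * M * k := by ring
    omega
  have hk4 : 4 * k ≤ ℓ := le_trans (Nat.mul_le_mul_right k hM4) hMk
  -- sum bound
  have hσb : σ ≤ k * (Φ / (2 * ℓ + 1)) := by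
    rw [hσdef, hkdef]
    have h := Finset.sum_le_card_nsmul pf (fun p => Φ / p) (Φ / (2 * ℓ + 1)) ?_
    · simpa [smul_eq_mul] using h
    · intro p hp
      exact Nat.div_le_div_left (hAfact p hp).2.1 (by omega)
  have hMσ : M * σ ≤ Φ / 2 := by
    calc M * σ ≤ M * (k * (Φ / (2 * ℓ + 1))) := Nat.mul_le_mul_left _ hσb
      _ = (M * k) * (Φ / (2 * ℓ + 1)) := by ring
      _ ≤ ℓ * (Φ / (2 * ℓ + 1)) := Nat.mul_le_mul_right _ hMk
      _ ≤ (ℓ * Φ) / (2 * ℓ + 1) := Nat.mul_div_le_mul_div_assoc _ _ _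
      _ ≤ (ℓ * Φ) / (2 * ℓ) := Nat.div_le_div_left (by omega) (by omega)
      _ = Φ / 2 := by rw [show 2 * ℓ = ℓ * 2 by ring, Nat.mul_div_mul_left _ _ (by omega : 0 < ℓ)]
  -- growth bound
  have hgrow : 4 * c.natAbs * ℓ * v ^ ℓ ≤ Φ := by
    obtain ⟨j, hj⟩ : ∃ j, ℓ = 2 * (j + 1) + 1 := by
      rcases hℓ.eq_two_or_odd' with h | h
      · omega
      · rcases h with ⟨t, ht⟩
        exact ⟨t - 1, by omega⟩
    have h12 : 12 * c.natAbs * v ^ 3 ≤ j + 1 := by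
      have h12' : 12 * c.natAbs * v ^ 3 = 12 * t2 := by rw [ht2def]; ring
      omega
    have hg := growth u v c.natAbs j huv h12
    calc 4 * c.natAbs * ℓ * v ^ ℓ
        = 4 * c.natAbs * (2 * (j + 1) + 1) * v ^ (2 * (j + 1) + 1) := by rw [hj]
      _ ≤ u ^ (2 * (j + 1)) := hg
      _ = u ^ (ℓ - 1) := by congr 1; omega
      _ ≤ Φ := hΦlb
  -- |X| < Φ
  have habs : X.natAbs < Φ := by
    have hw : ((u : ℤ) - v) = ((u - v : ℕ) : ℤ) := by omega
    have h1 : X.natAbs ≤ b.natAbs * (u - v) * σ + c.natAbs * ℓ * v ^ ℓ := by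
      calc X.natAbs ≤ (b * ((u : ℤ) - v) * σ).natAbs + (c * ℓ * (v : ℤ) ^ ℓ).natAbs :=
            Int.natAbs_add_le _ _
        _ = b.natAbs * (u - v) * σ + c.natAbs * ℓ * v ^ ℓ := by
            rw [hw]
            simp [Int.natAbs_mul, Int.natAbs_pow]
    have e1 : M * σ = 4 * (b.natAbs * (u - v) * σ) := by rw [hMdef]; ring
    have e2 : 4 * (c.natAbs * ℓ * v ^ ℓ) = 4 * c.natAbs * ℓ * v ^ ℓ := by ring
    omega
  have hX0 : X = 0 := int_eq_zero_of_natCast_dvd hΦX habs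
  -- mod ℓ finish
  have hℓZ : Prime (ℓ : ℤ) := Int.prime_iff_natAbs_prime.mpr (by simpa using hℓ)
  have hℓσ : (ℓ : ℤ) ∣ b * ((u : ℤ) - v) * σ := by
    refine ⟨-(c * (v : ℤ) ^ ℓ), ?_⟩
    have hX0' : b * ((u : ℤ) - v) * σ + c * ℓ * (v : ℤ) ^ ℓ = 0 := by rw [← hXdef]; exact hX0
    linear_combination hX0'
  have hbnd : ¬ (ℓ : ℤ) ∣ b := not_dvd_of_natAbs_lt (ne_of_gt hb) hbℓ
  have hwnd : ¬ (ℓ : ℤ) ∣ ((u : ℤ) - v) := by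
    apply not_dvd_of_natAbs_lt
    · omega
    · have : ((u : ℤ) - v).natAbs = u - v := by omega
      omega
  have hσdvd : (ℓ : ℤ) ∣ (σ : ℤ) := by
    rcases hℓZ.dvd_mul.mp hℓσ with h | h
    · rcases hℓZ.dvd_mul.mp h with h' | h'
      · exact absurd h' hbnd
      · exact absurd h' hwnd
    · exact h
  have hσdvdN : ℓ ∣ σ := Int.natCast_dvd_natCast.mp hσdvd
  -- σ ≡ k mod ℓ
  have hq1 : ∀ q ∈ pf, ((q : ℕ) : ZMod ℓ) = 1 := by
    intro q hq
    obtain ⟨h1, h2, h3⟩ := hAfact q hq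
    obtain ⟨m, hm⟩ := h1
    have hq2 : q = ℓ * m + 1 := by omega
    rw [hq2]
    push_cast
    rw [ZMod.natCast_self]
    ring
  have hdivq : ∀ p ∈ pf, ((Φ / p : ℕ) : ZMod ℓ) = 1 := by
    intro p hp
    have hΦeq : Φ = p * ∏ q ∈ pf.erase p, q := by
      rw [← hprod]
      exact (Finset.mul_prod_erase pf (fun q => q) hp).symm
    have hdiv : Φ / p = ∏ q ∈ pf.erase p, q := by
      rw [hΦeq, Nat.mul_div_cancel_left _ (hmemf p hp).1.pos]
    rw [hdiv]
    push_cast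
    apply Finset.prod_eq_one
    intro q hq
    exact hq1 q (Finset.mem_of_mem_erase hq)
  have hσk : ((σ : ℕ) : ZMod ℓ) = (k : ZMod ℓ) := by
    calc ((σ : ℕ) : ZMod ℓ) = ∑ p ∈ pf, ((Φ / p : ℕ) : ZMod ℓ) := by
          rw [hσdef]; push_cast; rfl
      _ = ∑ _p ∈ pf, (1 : ZMod ℓ) := Finset.sum_congr rfl (fun p hp => hdivq p hp)
      _ = (k : ZMod ℓ) := by rw [Finset.sum_const, hkdef]; simp
  have hσ0 : ((σ : ℕ) : ZMod ℓ) = 0 := (ZMod.natCast_eq_zero_iff _ _).mpr hσdvdN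
  have hkdvd : ℓ ∣ k := by
    rw [← ZMod.natCast_eq_zero_iff, ← hσk]
    exact hσ0
  have hk0 : k = 0 := by
    rcases Nat.eq_zero_or_pos k with h | h
    · exact h
    · exact Nat.eq_zero_of_dvd_of_lt hkdvd (by omega)
  rw [hkdef] at hk0
  have hempty : pf = ∅ := Finset.card_eq_zero.mp hk0
  rw [hempty] at hprod
  simp at hprod
  omega

/-- For a nonzero rational `α` with `|α| ≠ 1`, `log_A(α)` is not equal to any
nonzero rational: for all integers `a ≠ 0`, `b > 0`, infinitely many primes `p`
satisfy `b·q_p(α) ≢ a (mod p)`. -/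
theorem statement16 (α : ℚ) (hα0 : α ≠ 0) (hα1 : |α| ≠ 1) (a b : ℤ)
    (ha : a ≠ 0) (hb : 0 < b) :
    {p : ℕ | p.Prime ∧ ¬ RatModEqP p ((b : ℚ) * fermatQuot p α) (a : ℚ)}.Infinite := by
  by_contra hinf
  rw [Set.not_infinite] at hinf
  obtain ⟨P₀, hP₀⟩ := hinf.bddAbove
  set x : ℤ := α.num with hxdef
  set y : ℕ := α.den with hydef
  have hy1 : 1 ≤ y := α.pos
  have hx0 : x ≠ 0 := Rat.num_ne_zero.mpr hα0
  have hx1 : 1 ≤ x.natAbs := by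
    have : x.natAbs ≠ 0 := fun h => hx0 (Int.natAbs_eq_zero.mp h)
    omega
  have hyQ : ((y : ℚ)) ≠ 0 := by exact_mod_cast Nat.pos_iff_ne_zero.mp α.pos
  have hxy : x.natAbs ≠ y := by
    intro h
    apply hα1
    have hden : ((α.den : ℚ)) ≠ 0 := hyQ
    rcases Int.natAbs_eq x with h' | h'
    · have hα : α = 1 := by
        rw [← Rat.num_div_den α]
        rw [show α.num = (α.den : ℤ) by rw [← hxdef, h', h, hydef]]
        push_cast
        exact div_self hden
      rw [hα]; simp
    · have hα : α = -1 := by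
        rw [← Rat.num_div_den α]
        rw [show α.num = -(α.den : ℤ) by rw [← hxdef, h', h, hydef]]
        push_cast
        rw [neg_div]
        rw [div_self hden]
      rw [hα]; simp
  set P : ℕ := P₀ + x.natAbs + y + b.natAbs + a.natAbs + 1 with hPdef
  have hRME : ∀ p : ℕ, p.Prime → P < p → RatModEqP p ((b : ℚ) * fermatQuot p α) a := by
    intro p hp hPp
    by_contra hcon
    have hmem : p ∈ {p : ℕ | p.Prime ∧ ¬ RatModEqP p ((b : ℚ) * fermatQuot p α) (a : ℚ)} :=
      ⟨hp, hcon⟩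
    have := hP₀ hmem
    omega
  have HA : ∀ p : ℕ, p.Prime → P < p →
      (p : ℤ) ^ 2 ∣ b * (x ^ (p - 1) - (y : ℤ) ^ (p - 1)) - a * p * (y : ℤ) ^ (p - 1) := by
    intro p hp hPp
    exact toIntHyp α a b p hp (by omega) (hRME p hp hPp)
  have hbp : ∀ p : ℕ, P < p → ¬ (p : ℤ) ∣ b := fun p hPp =>
    not_dvd_of_natAbs_lt (ne_of_gt hb) (by omega)
  have hcop : x.natAbs.Coprime y := α.reduced
  have ha2 : (2 : ℤ) * a ≠ 0 := by simp [ha]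
  -- square computations
  have he1 : ∀ p : ℕ, ((x.natAbs ^ 2 : ℕ) : ℤ) ^ (p - 1) = (x ^ (p - 1)) ^ 2 := by
    intro p
    push_cast
    rw [sq_abs, ← pow_mul, ← pow_mul, Nat.mul_comm]
  have he2 : ∀ p : ℕ, ((y ^ 2 : ℕ) : ℤ) ^ (p - 1) = ((y : ℤ) ^ (p - 1)) ^ 2 := by
    intro p
    push_cast
    rw [← pow_mul, ← pow_mul, Nat.mul_comm]
  rcases Nat.lt_or_ge x.natAbs y with hlt | hge
  · -- |x| < y : use u = y², v = x.natAbs², c = -(2a)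
    apply core (y ^ 2) (x.natAbs ^ 2) (Nat.one_le_pow _ _ (by omega))
      (Nat.pow_lt_pow_left hlt (by norm_num)) (hcop.symm.pow _ _) b (-(2 * a)) hb
      (by simpa using ha2) P
    intro p hp hPp
    have H1 := HA p hp hPp
    have H2 := step2 b a (x ^ (p - 1)) ((y : ℤ) ^ (p - 1)) p hp (hbp p hPp) H1
    have H3 := stepSwap b (2 * a) ((x ^ (p - 1)) ^ 2) (((y : ℤ) ^ (p - 1)) ^ 2) p hp
      (hbp p hPp) H2
    rw [he1 p, he2 p]
    exact H3
  · -- y < |x| : use u = x.natAbs², v = y², c = 2a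
    have hgt : y < x.natAbs := by omega
    apply core (x.natAbs ^ 2) (y ^ 2) (Nat.one_le_pow _ _ (by omega))
      (Nat.pow_lt_pow_left hgt (by norm_num)) (hcop.pow _ _) b (2 * a) hb ha2 P
    intro p hp hPp
    have H1 := HA p hp hPp
    have H2 := step2 b a (x ^ (p - 1)) ((y : ℤ) ^ (p - 1)) p hp (hbp p hPp) H1
    rw [he1 p, he2 p]
    exact H2
end

section
/- Assume that for every prime p ≡ 3 (mod 4) with p > 3, the Bernoulli number B_{(p+1)/2} satisfies −2·B_{(p+1)/2} ≡ h(−p) (mod p) in ℤ_(p), where h(−p) is the class number of ℚ(√−p), and that 0 < h(−p) < p. Assume also that for every prime p ≡ 1 (mod 4), B_{(p+1)/2} = 0 and (1/2)E_{(p−1)/2} ≡ h(−4p) (mod p) with 0 < h(−4p) < p, where E_n is the n-th Euler number. Then the elements B := (B_{(p+1)/2} mod p)_p and E := (E_{(p−1)/2} mod p)_p of A are linearly independent over ℚ. -/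
/-- The Euler numbers `E_n`, defined by `sech t = Σ E_n t^n / n!`. -/
noncomputable def eulerNumber (n : ℕ) : ℚ :=
  (n.factorial : ℚ) * PowerSeries.coeff (R := ℚ) n
    (PowerSeries.mk fun k => if Even k then (1 : ℚ) / k.factorial else 0)⁻¹

/-- integer not divisible by p has valuation 0 -/
lemma aux_int_val (p : ℕ) [Fact p.Prime] {n : ℤ} (hn : ¬ (p : ℤ) ∣ n) :
    padicValRat p (n : ℚ) = 0 := by
  rw [padicValRat.of_int, padicValInt.eq_zero_of_not_dvd hn]; rfl

lemma aux_key (p : ℕ) [hp : Fact p.Prime] {x : ℚ} {n : ℤ} (hn : ¬ (p : ℤ) ∣ n)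
    (hx : RatModEqP p x n) : x ≠ 0 ∧ padicValRat p x = 0 := by
  have hn0 : (n : ℚ) ≠ 0 := by
    intro h0
    have : n = 0 := by exact_mod_cast h0
    exact hn (this ▸ dvd_zero _)
  have hvn : padicValRat p (n : ℚ) = 0 := aux_int_val p hn
  rcases hx with hx | hx
  · exact ⟨hx ▸ hn0, hx ▸ hvn⟩
  · have hd : x - n ≠ 0 := by
      intro h0; rw [h0] at hx; simp [padicValRat] at hx
    have hx0 : x ≠ 0 := by
      intro h0
      rw [h0, zero_sub, padicValRat.neg, hvn] at hx
      exact lt_irrefl 0 hx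
    refine ⟨hx0, ?_⟩
    have heq : x = (x - n) + n := by ring
    have hne : padicValRat p (x - n) ≠ padicValRat p (n : ℚ) := by
      rw [hvn]; exact ne_of_gt hx
    have := padicValRat.add_eq_min (p := p) (q := x - n) (r := n)
      (by rw [← heq]; exact hx0) hd hn0 hne
    rw [← heq, hvn] at this
    rw [this, min_eq_right (le_of_lt hx)]

lemma aux_step (p : ℕ) [hp : Fact p.Prime] {c d X : ℚ} {n : ℤ} (hn : ¬ (p : ℤ) ∣ n)
    (hc : c ≠ 0) (hvc : padicValRat p c = 0) (hd : d ≠ 0) (hvd : padicValRat p d = 0)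
    (hcong : RatModEqP p (c * X) n) : ¬ RatModEqP p (d * X) 0 := by
  obtain ⟨hcx, hvcx⟩ := aux_key p hn hcong
  have hX : X ≠ 0 := fun h0 => hcx (by rw [h0, mul_zero])
  have hvX : padicValRat p X = 0 := by
    have := padicValRat.mul (p := p) hc hX
    rw [hvcx, hvc] at this; omega
  intro hcon
  rcases hcon with h0 | h0
  · exact mul_ne_zero hd hX h0
  · rw [sub_zero, padicValRat.mul hd hX, hvd, hvX] at h0
    exact lt_irrefl 0 h0

lemma aux_not_dvd (p : ℕ) {m : ℤ} (hm : m ≠ 0) (hlt : m.natAbs < p) : ¬ (p : ℤ) ∣ m := by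
  intro hd
  have h1 : p ∣ m.natAbs := by
    have := Int.natAbs_dvd_natAbs.mpr hd
    simpa using this
  have := Nat.le_of_dvd (Int.natAbs_pos.mpr hm) h1
  omega

lemma aux_mod4 (p a : ℕ) (hp : (p : ZMod 4) = ((a : ℕ) : ZMod 4)) : p % 4 = a % 4 := by
  have := (ZMod.natCast_eq_natCast_iff p a 4).mp hp
  simpa [Nat.ModEq] using this

/-- Assuming the classical congruences relating `B_{(p+1)/2}` and `E_{(p-1)/2}`
to class numbers `h(-p)` and `h(-4p)`, the elements `B = (B_{(p+1)/2} mod p)_p`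
and `E = (E_{(p-1)/2} mod p)_p` of `A` are linearly independent over `ℚ`. -/
theorem statement17 (h : ℕ → ℕ)
    (hyp3 : ∀ p : ℕ, p.Prime → 3 < p → p % 4 = 3 →
      RatModEqP p (-2 * bernoulli' ((p + 1) / 2)) (h p) ∧ 0 < h p ∧ h p < p)
    (hyp1 : ∀ p : ℕ, p.Prime → p % 4 = 1 →
      bernoulli' ((p + 1) / 2) = 0 ∧
      RatModEqP p ((1 / 2 : ℚ) * eulerNumber ((p - 1) / 2)) (h (4 * p)) ∧
      0 < h (4 * p) ∧ h (4 * p) < p)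
    (b e : ℤ)
    (hlin : {p : ℕ | p.Prime ∧ ¬ RatModEqP p
      ((b : ℚ) * bernoulli' ((p + 1) / 2) + (e : ℚ) * eulerNumber ((p - 1) / 2))
      0}.Finite) :
    b = 0 ∧ e = 0 := by
  have he : e = 0 := by
    by_contra he0
    have hinf : {p : ℕ | p.Prime ∧ (p : ZMod 4) = 1}.Infinite :=
      Nat.infinite_setOfPred_prime_and_eq_mod isUnit_one
    obtain ⟨p, hpmem, hpgt⟩ := (hinf.diff hlin).exists_gt (2 * e.natAbs + 3)
    obtain ⟨⟨hp, hp4⟩, hnot⟩ := hpmem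
    haveI : Fact p.Prime := ⟨hp⟩
    have hm4 : p % 4 = 1 := by
      have : (p : ZMod 4) = ((1 : ℕ) : ZMod 4) := by rw [hp4]; norm_cast
      simpa using aux_mod4 p 1 this
    obtain ⟨hB, hcong, hh0, hhp⟩ := hyp1 p hp hm4
    have hndvd : ¬ (p : ℤ) ∣ ((h (4 * p) : ℕ) : ℤ) :=
      aux_not_dvd p (by exact_mod_cast hh0.ne') (by simpa using hhp)
    have hpe : ¬ (p : ℤ) ∣ e := aux_not_dvd p he0 (by omega)
    have hp2 : ¬ (p : ℤ) ∣ (2 : ℤ) := aux_not_dvd p (by norm_num) (by simp; omega)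
    have hmem : RatModEqP p
        ((b : ℚ) * bernoulli' ((p + 1) / 2) + (e : ℚ) * eulerNumber ((p - 1) / 2)) 0 := by
      by_contra hc; exact hnot ⟨hp, hc⟩
    rw [hB, mul_zero, zero_add] at hmem
    have hvhalf : padicValRat p ((1 : ℚ) / 2) = 0 := by
      rw [one_div, padicValRat.inv]
      have : padicValRat p ((2 : ℤ) : ℚ) = 0 := aux_int_val p hp2
      simp at this ⊢
      rw [this]
    have hve : padicValRat p ((e : ℤ) : ℚ) = 0 := aux_int_val p hpe
    exact aux_step p hndvd (by norm_num) hvhalf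
      (by exact_mod_cast he0) hve hcong hmem
  subst he
  refine ⟨?_, rfl⟩
  by_contra hb0
  have hinf : {p : ℕ | p.Prime ∧ (p : ZMod 4) = 3}.Infinite :=
    Nat.infinite_setOfPred_prime_and_eq_mod (by decide)
  obtain ⟨p, hpmem, hpgt⟩ := (hinf.diff hlin).exists_gt (2 * b.natAbs + 3)
  obtain ⟨⟨hp, hp4⟩, hnot⟩ := hpmem
  haveI : Fact p.Prime := ⟨hp⟩
  have hm4 : p % 4 = 3 := by
    have : (p : ZMod 4) = ((3 : ℕ) : ZMod 4) := by rw [hp4]; norm_cast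
    simpa using aux_mod4 p 3 this
  obtain ⟨hcong, hh0, hhp⟩ := hyp3 p hp (by omega) hm4
  have hndvd : ¬ (p : ℤ) ∣ ((h p : ℕ) : ℤ) :=
    aux_not_dvd p (by exact_mod_cast hh0.ne') (by simpa using hhp)
  have hpb : ¬ (p : ℤ) ∣ b := aux_not_dvd p hb0 (by omega)
  have hp2 : ¬ (p : ℤ) ∣ (2 : ℤ) := aux_not_dvd p (by norm_num) (by simp; omega)
  have hmem : RatModEqP p
      ((b : ℚ) * bernoulli' ((p + 1) / 2) + ((0 : ℤ) : ℚ) * eulerNumber ((p - 1) / 2)) 0 := by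
    by_contra hc; exact hnot ⟨hp, hc⟩
  rw [Int.cast_zero, zero_mul, add_zero] at hmem
  have hvneg2 : padicValRat p (-2 : ℚ) = 0 := by
    rw [padicValRat.neg]
    have : padicValRat p ((2 : ℤ) : ℚ) = 0 := aux_int_val p hp2
    simpa using this
  have hvb : padicValRat p ((b : ℤ) : ℚ) = 0 := aux_int_val p hpb
  exact aux_step p hndvd (by norm_num) hvneg2 (by exact_mod_cast hb0) hvb hcong hmem
end
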